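/- arXiv:1805.04804 — 7 statements merged into one kernel-verified Lean document; each statement's English description precedes it below -/
import Mathlib

section
/- (Maximum principle on a moving domain) Let d > 0, h0 > 0, T > 0. Let g, h : [0,T] → ℝ be continuous with h(0) = h0, g(0) = −h0, inf_{0≤t1<t2≤T} (h(t2)−h(t1))/(t2−t1) > 0 and sup_{0≤t1<t2≤T} (g(t2)−g(t1))/(t2−t1) < 0. Let Ω = {(t,x) : 0 < t ≤ T, g(t) < x < h(t)}. Suppose u and ∂ₜu are continuous on the closure of Ω, c is a bounded (measurable) function on Ω, and: ∂ₜu(t,x) ≥ d∫_{g(t)}^{h(t)} J(x−y) u(t,y) dy − d·u(t,x) + c(t,x)·u(t,x) for all 0 < t ≤ T and g(t) < x < h(t); u(t,g(t)) ≥ 0 and u(t,h(t)) ≥ 0 for 0 < t ≤ T; and u(0,x) ≥ 0 for x ∈ [−h0, h0]. Then u(t,x) ≥ 0 for all 0 ≤ t ≤ T and x ∈ [g(t), h(t)]. Moreover, if u(0,·) is not identically zero on [−h0, h0], then u(t,x) > 0 for all 0 < t ≤ T and g(t) < x < h(t). -/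
open MeasureTheory Set Filter Topology

set_option maxHeartbeats 2000000 in
/-- **Maximum principle on a moving domain** (Lemma 2.2 of Cao–Du–Li–Li). -/
theorem maximum_principle_moving_domain
    (J : ℝ → ℝ) (hJc : Continuous J) (hJnn : ∀ x, 0 ≤ J x)
    (hJeven : ∀ x, J (-x) = J x) (hJbdd : BddAbove (Set.range J))
    (hJ0 : 0 < J 0) (hJint : Integrable J) (hJ1 : (∫ x, J x) = 1)
    (d h0 T : ℝ) (hd : 0 < d) (hh0 : 0 < h0) (hT : 0 < T)
    (g h : ℝ → ℝ)
    (hgc : ContinuousOn g (Set.Icc 0 T)) (hhc : ContinuousOn h (Set.Icc 0 T))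
    (hh00 : h 0 = h0) (hg00 : g 0 = -h0)
    (hhinc : ∃ c > 0, ∀ t1 t2, 0 ≤ t1 → t1 < t2 → t2 ≤ T → c ≤ (h t2 - h t1) / (t2 - t1))
    (hgdec : ∃ c > 0, ∀ t1 t2, 0 ≤ t1 → t1 < t2 → t2 ≤ T → (g t2 - g t1) / (t2 - t1) ≤ -c)
    (u ut c : ℝ → ℝ → ℝ)
    (huc : ContinuousOn (fun p : ℝ × ℝ => u p.1 p.2)
      {p : ℝ × ℝ | 0 ≤ p.1 ∧ p.1 ≤ T ∧ g p.1 ≤ p.2 ∧ p.2 ≤ h p.1})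
    (hutc : ContinuousOn (fun p : ℝ × ℝ => ut p.1 p.2)
      {p : ℝ × ℝ | 0 ≤ p.1 ∧ p.1 ≤ T ∧ g p.1 ≤ p.2 ∧ p.2 ≤ h p.1})
    (hderiv : ∀ t x, 0 < t → t ≤ T → g t < x → x < h t →
      HasDerivAt (fun s => u s x) (ut t x) t)
    (hcbdd : ∃ C, ∀ t x, 0 < t → t ≤ T → g t < x → x < h t → |c t x| ≤ C)
    (hineq : ∀ t x, 0 < t → t ≤ T → g t < x → x < h t →
      d * (∫ y in g t..h t, J (x - y) * u t y) - d * u t x + c t x * u t x ≤ ut t x)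
    (hbdry : ∀ t, 0 < t → t ≤ T → 0 ≤ u t (g t) ∧ 0 ≤ u t (h t))
    (hinit : ∀ x, -h0 ≤ x → x ≤ h0 → 0 ≤ u 0 x) :
    (∀ t x, 0 ≤ t → t ≤ T → g t ≤ x → x ≤ h t → 0 ≤ u t x) ∧
    ((∃ x, -h0 ≤ x ∧ x ≤ h0 ∧ u 0 x ≠ 0) →
      ∀ t x, 0 < t → t ≤ T → g t < x → x < h t → 0 < u t x) := by
  obtain ⟨ch, hchpos, hhi⟩ := hhinc
  obtain ⟨cg, hcgpos, hgd⟩ := hgdec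
  obtain ⟨C0, hC0⟩ := hcbdd
  obtain ⟨C, hCdef⟩ : ∃ C : ℝ, C = max C0 0 := ⟨_, rfl⟩
  have hCnn : (0:ℝ) ≤ C := by rw [hCdef]; exact le_max_right _ _
  set D : Set (ℝ × ℝ) := {p : ℝ × ℝ | 0 ≤ p.1 ∧ p.1 ≤ T ∧ g p.1 ≤ p.2 ∧ p.2 ≤ h p.1}
    with hDdef
  -- bound on c
  have hcC : ∀ t x, 0 < t → t ≤ T → g t < x → x < h t → -C ≤ c t x ∧ c t x ≤ C := by
    intro t x h1 h2 h3 h4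
    have hb := hC0 t x h1 h2 h3 h4
    have hb2 := abs_le.mp hb
    have hC0le : C0 ≤ C := by rw [hCdef]; exact le_max_left _ _
    constructor <;> linarith [hb2.1, hb2.2]
  -- strict monotonicity of h and g
  have hmh' : ∀ t1 t2, 0 ≤ t1 → t1 < t2 → t2 ≤ T → h t1 < h t2 := by
    intro t1 t2 h1 h2 h3
    have := hhi t1 t2 h1 h2 h3
    have h4 : 0 < t2 - t1 := sub_pos.2 h2
    rw [le_div_iff₀ h4] at this
    nlinarith
  have hmg' : ∀ t1 t2, 0 ≤ t1 → t1 < t2 → t2 ≤ T → g t2 < g t1 := by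
    intro t1 t2 h1 h2 h3
    have := hgd t1 t2 h1 h2 h3
    have h4 : 0 < t2 - t1 := sub_pos.2 h2
    rw [div_le_iff₀ h4] at this
    nlinarith
  have hmh : ∀ t1 t2, 0 ≤ t1 → t1 ≤ t2 → t2 ≤ T → h t1 ≤ h t2 := by
    intro t1 t2 h1 h2 h3
    rcases eq_or_lt_of_le h2 with rfl | hlt
    · exact le_rfl
    · exact (hmh' t1 t2 h1 hlt h3).le
  have hmg : ∀ t1 t2, 0 ≤ t1 → t1 ≤ t2 → t2 ≤ T → g t2 ≤ g t1 := by
    intro t1 t2 h1 h2 h3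
    rcases eq_or_lt_of_le h2 with rfl | hlt
    · exact le_rfl
    · exact (hmg' t1 t2 h1 hlt h3).le
  have hgT : ∀ t, 0 ≤ t → t ≤ T → g t ≤ -h0 := by
    intro t h1 h2
    have := hmg 0 t le_rfl h1 h2
    rw [hg00] at this; exact this
  have hhT : ∀ t, 0 ≤ t → t ≤ T → h0 ≤ h t := by
    intro t h1 h2
    have := hmh 0 t le_rfl h1 h2
    rw [hh00] at this; exact this
  have hgh : ∀ t, 0 ≤ t → t ≤ T → g t < h t := by
    intro t h1 h2
    have := hgT t h1 h2; have := hhT t h1 h2; linarith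
  -- continuity of slices
  have hucx : ∀ t, 0 ≤ t → t ≤ T → ContinuousOn (fun y => u t y) (Icc (g t) (h t)) := by
    intro t h1 h2
    exact huc.comp ((continuous_const.prodMk continuous_id).continuousOn)
      (fun y hy => ⟨h1, h2, hy.1, hy.2⟩)
  have huct : ∀ x a b, 0 ≤ a → b ≤ T → (∀ r, r ∈ Icc a b → g r ≤ x ∧ x ≤ h r) →
      ContinuousOn (fun r => u r x) (Icc a b) := by
    intro x a b h1 h2 h3
    exact huc.comp ((continuous_id.prodMk continuous_const).continuousOn)
      (fun r hr => ⟨h1.trans hr.1, hr.2.trans h2, (h3 r hr).1, (h3 r hr).2⟩)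
  -- left approach times
  have hleft : ∀ s x2, 0 < s → s ≤ T → g s < x2 → x2 < h s →
      ∃ a, 0 < a ∧ a < s ∧ g a < x2 ∧ x2 < h a := by
    intro s x2 hs1 hs2 hs3 hs4
    have hcl : s ∈ closure (Ioo 0 s) := by
      rw [closure_Ioo (ne_of_lt hs1)]; exact ⟨hs1.le, le_rfl⟩
    haveI hnb : (𝓝[Ioo 0 s] s).NeBot := mem_closure_iff_nhdsWithin_neBot.mp hcl
    have hsub : Ioo 0 s ⊆ Icc 0 T := fun r hr => ⟨hr.1.le, hr.2.le.trans hs2⟩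
    have hgti : Tendsto g (𝓝[Ioo 0 s] s) (𝓝 (g s)) :=
      (hgc s ⟨hs1.le, hs2⟩).mono_left (nhdsWithin_mono _ hsub)
    have hhti : Tendsto h (𝓝[Ioo 0 s] s) (𝓝 (h s)) :=
      (hhc s ⟨hs1.le, hs2⟩).mono_left (nhdsWithin_mono _ hsub)
    have hev1 : ∀ᶠ a in 𝓝[Ioo 0 s] s, g a < x2 := hgti.eventually_lt_const hs3
    have hev2 : ∀ᶠ a in 𝓝[Ioo 0 s] s, x2 < h a := hhti.eventually_const_lt hs4
    have hev3 : ∀ᶠ a in 𝓝[Ioo 0 s] s, a ∈ Ioo 0 s := self_mem_nhdsWithin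
    obtain ⟨a, ha1, ha2, ha3⟩ := (hev1.and (hev2.and hev3)).exists
    exact ⟨a, ha3.1, ha3.2, ha1, ha2⟩
  -- Compactness of D
  set G : ℝ → ℝ := fun t => g (min (max t 0) T) with hGdef
  set H : ℝ → ℝ := fun t => h (min (max t 0) T) with hHdef
  have hmem : ∀ t : ℝ, min (max t 0) T ∈ Icc 0 T :=
    fun t => ⟨le_min (le_max_right t 0) hT.le, min_le_right _ _⟩
  have hGc : Continuous G := hgc.comp_continuous
    ((continuous_id.max continuous_const).min continuous_const) hmem
  have hHc : Continuous H := hhc.comp_continuous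
    ((continuous_id.max continuous_const).min continuous_const) hmem
  have hGg : ∀ t, 0 ≤ t → t ≤ T → G t = g t := by
    intro t h1 h2
    have : min (max t 0) T = t := by
      rw [max_eq_left h1, min_eq_left h2]
    rw [hGdef]; simp only [this]
  have hHh : ∀ t, 0 ≤ t → t ≤ T → H t = h t := by
    intro t h1 h2
    have : min (max t 0) T = t := by
      rw [max_eq_left h1, min_eq_left h2]
    rw [hHdef]; simp only [this]
  have hDeq : D = {p : ℝ × ℝ | 0 ≤ p.1} ∩ {p | p.1 ≤ T} ∩ {p | G p.1 ≤ p.2} ∩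
      {p | p.2 ≤ H p.1} := by
    ext ⟨t, x⟩
    simp only [hDdef, mem_setOf_eq, mem_inter_iff]
    constructor
    · rintro ⟨h1, h2, h3, h4⟩
      rw [hGg t h1 h2, hHh t h1 h2]
      exact ⟨⟨⟨h1, h2⟩, h3⟩, h4⟩
    · rintro ⟨⟨⟨h1, h2⟩, h3⟩, h4⟩
      rw [hGg t h1 h2] at h3; rw [hHh t h1 h2] at h4
      exact ⟨h1, h2, h3, h4⟩
  have hDclosed : IsClosed D := by
    rw [hDeq]
    exact (((isClosed_le continuous_const continuous_fst).inter
      (isClosed_le continuous_fst continuous_const)).inter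
      (isClosed_le (hGc.comp continuous_fst) continuous_snd)).inter
      (isClosed_le continuous_snd (hHc.comp continuous_fst))
  obtain ⟨tA, htA, hA'⟩ := isCompact_Icc.exists_isMinOn (nonempty_Icc.mpr hT.le)
    (hGc.continuousOn (s := Icc 0 T))
  have hA := isMinOn_iff.mp hA'
  obtain ⟨tB, htB, hB'⟩ := isCompact_Icc.exists_isMaxOn (nonempty_Icc.mpr hT.le)
    (hHc.continuousOn (s := Icc 0 T))
  have hB := isMaxOn_iff.mp hB'
  have hDsub : D ⊆ Icc 0 T ×ˢ Icc (G tA) (H tB) := by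
    rintro ⟨t, x⟩ ⟨h1, h2, h3, h4⟩
    refine ⟨⟨h1, h2⟩, ?_, ?_⟩
    · calc G tA ≤ G t := hA t ⟨h1, h2⟩
        _ = g t := hGg t h1 h2
        _ ≤ x := h3
    · calc x ≤ h t := h4
        _ = H t := (hHh t h1 h2).symm
        _ ≤ H tB := hB t ⟨h1, h2⟩
  have hDcomp : IsCompact D :=
    (isCompact_Icc.prod isCompact_Icc).of_isClosed_subset hDclosed hDsub
  have hDne : D.Nonempty := by
    refine ⟨(0, 0), le_rfl, hT.le, ?_, ?_⟩
    · show g 0 ≤ 0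
      rw [hg00]; linarith
    · show (0:ℝ) ≤ h 0
      rw [hh00]; linarith
  -- Part 1
  obtain ⟨k, hkdef⟩ : ∃ k : ℝ, k = C + 1 := ⟨_, rfl⟩
  have hvc : ContinuousOn (fun p : ℝ × ℝ => Real.exp (-k * p.1) * u p.1 p.2) D :=
    ((Real.continuous_exp.comp (continuous_const.mul continuous_fst)).continuousOn).mul huc
  obtain ⟨⟨t0, x0⟩, hp0, hmin'⟩ := hDcomp.exists_isMinOn hDne hvc
  have hmin : ∀ q ∈ D, Real.exp (-k * t0) * u t0 x0 ≤ Real.exp (-k * q.1) * u q.1 q.2 := by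
    intro q hq
    exact isMinOn_iff.mp hmin' q hq
  obtain ⟨hp1, hp2, hp3, hp4⟩ := hp0
  simp only at hp1 hp2 hp3 hp4
  have hv0 : 0 ≤ Real.exp (-k * t0) * u t0 x0 := by
    by_contra hneg
    push_neg at hneg
    have hu0neg : u t0 x0 < 0 := by nlinarith [Real.exp_pos (-k * t0)]
    -- t0 > 0
    have ht0 : 0 < t0 := by
      rcases eq_or_lt_of_le hp1 with heq | hpos
      · exfalso
        rw [← heq] at hp3 hp4 hu0neg
        rw [hg00] at hp3; rw [hh00] at hp4
        linarith [hinit x0 hp3 hp4]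
      · exact hpos
    have hgx0 : g t0 < x0 := by
      rcases eq_or_lt_of_le hp3 with heq | hlt
      · exfalso
        have := (hbdry t0 ht0 hp2).1
        rw [heq] at this; linarith
      · exact hlt
    have hx0h : x0 < h t0 := by
      rcases eq_or_lt_of_le hp4 with heq | hlt
      · exfalso
        have := (hbdry t0 ht0 hp2).2
        rw [← heq] at this; linarith
      · exact hlt
    obtain ⟨a, ha1, ha2, ha3, ha4⟩ := hleft t0 x0 ht0 hp2 hgx0 hx0h
    have hmemD : ∀ r, r ∈ Icc a t0 → (r, x0) ∈ D := by
      intro r hr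
      refine ⟨ha1.le.trans hr.1, hr.2.trans hp2, ?_, ?_⟩
      · calc g r ≤ g a := hmg a r ha1.le hr.1 (hr.2.trans hp2)
          _ ≤ x0 := ha3.le
      · calc x0 ≤ h a := ha4.le
          _ ≤ h r := hmh a r ha1.le hr.1 (hr.2.trans hp2)
    have hminleft : ∀ r, r ∈ Icc a t0 →
        Real.exp (-k * t0) * u t0 x0 ≤ Real.exp (-k * r) * u r x0 := by
      intro r hr
      exact hmin (r, x0) (hmemD r hr)
    -- derivative of φ at t0
    have hd1 : HasDerivAt (fun r : ℝ => -k * r) (-k) t0 := by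
      simpa using (hasDerivAt_id t0).const_mul (-k)
    have hderφ : HasDerivAt (fun r => Real.exp (-k * r) * u r x0)
        (Real.exp (-k * t0) * -k * u t0 x0 + Real.exp (-k * t0) * ut t0 x0) t0 :=
      (hd1.exp).mul (hderiv t0 x0 ht0 hp2 hgx0 hx0h)
    have T1 : Tendsto (slope (fun r => Real.exp (-k * r) * u r x0) t0) (𝓝[<] t0)
        (𝓝 (Real.exp (-k * t0) * -k * u t0 x0 + Real.exp (-k * t0) * ut t0 x0)) :=
      (hasDerivAt_iff_tendsto_slope.mp hderφ).mono_left
        (nhdsWithin_mono _ (fun y hy => ne_of_lt hy))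
    have Hev : ∀ᶠ r in 𝓝[<] t0, slope (fun r => Real.exp (-k * r) * u r x0) t0 r ≤ 0 := by
      filter_upwards [Ioo_mem_nhdsLT_of_mem (show t0 ∈ Ioc a t0 from ⟨ha2, le_rfl⟩)] with r hr
      rw [slope_def_field]
      apply div_nonpos_of_nonneg_of_nonpos
      · linarith [hminleft r ⟨hr.1.le, hr.2.le⟩]
      · linarith [hr.2]
    have hφ'le : Real.exp (-k * t0) * -k * u t0 x0 + Real.exp (-k * t0) * ut t0 x0 ≤ 0 :=
      le_of_tendsto T1 Hev
    have hutle : ut t0 x0 ≤ k * u t0 x0 := by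
      nlinarith [Real.exp_pos (-k * t0)]
    -- integral lower bound
    have hab : g t0 ≤ h t0 := (hgh t0 hp1 hp2).le
    have hcont1 : ContinuousOn (fun y => J (x0 - y) * u t0 y) (Icc (g t0) (h t0)) :=
      ((hJc.comp (continuous_const.sub continuous_id)).continuousOn).mul (hucx t0 hp1 hp2)
    have hIu : IntervalIntegrable (fun y => J (x0 - y) * u t0 y) volume (g t0) (h t0) :=
      hcont1.intervalIntegrable_of_Icc hab
    have hIc : IntervalIntegrable (fun y => J (x0 - y) * u t0 x0) volume (g t0) (h t0) :=
      (((hJc.comp (continuous_const.sub continuous_id)).mul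
        continuous_const)).intervalIntegrable _ _
    have hulb : ∀ y, y ∈ Icc (g t0) (h t0) → u t0 x0 ≤ u t0 y := by
      intro y hy
      have h6 : Real.exp (-k * t0) * u t0 x0 ≤ Real.exp (-k * t0) * u t0 y :=
        hmin (t0, y) ⟨hp1, hp2, hy.1, hy.2⟩
      exact le_of_mul_le_mul_left h6 (Real.exp_pos _)
    have hIlow : (∫ y in g t0..h t0, J (x0 - y) * u t0 x0) ≤
        ∫ y in g t0..h t0, J (x0 - y) * u t0 y :=
      intervalIntegral.integral_mono_on hab hIc hIu
        (fun y hy => mul_le_mul_of_nonneg_left (hulb y hy) (hJnn _))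
    have hJint1 : (∫ y in g t0..h t0, J (x0 - y)) ≤ 1 := by
      rw [intervalIntegral.integral_comp_sub_left J x0]
      have hle : x0 - h t0 ≤ x0 - g t0 := by linarith
      rw [intervalIntegral.integral_of_le hle]
      calc (∫ x in Ioc (x0 - h t0) (x0 - g t0), J x) ≤ ∫ x, J x :=
          setIntegral_le_integral hJint (ae_of_all _ hJnn)
        _ = 1 := hJ1
    have hJint0 : 0 ≤ ∫ y in g t0..h t0, J (x0 - y) :=
      intervalIntegral.integral_nonneg hab (fun y _ => hJnn _)
    have hIconst : (∫ y in g t0..h t0, J (x0 - y) * u t0 x0) =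
        (∫ y in g t0..h t0, J (x0 - y)) * u t0 x0 :=
      intervalIntegral.integral_mul_const _ _
    have hkey : u t0 x0 ≤ ∫ y in g t0..h t0, J (x0 - y) * u t0 y := by
      rw [hIconst] at hIlow
      nlinarith
    -- combine
    have hi := hineq t0 x0 ht0 hp2 hgx0 hx0h
    have hcc := hcC t0 x0 ht0 hp2 hgx0 hx0h
    have h7 : C * u t0 x0 ≤ c t0 x0 * u t0 x0 :=
      mul_le_mul_of_nonpos_right hcc.2 hu0neg.le
    have h8 : d * u t0 x0 ≤ d * (∫ y in g t0..h t0, J (x0 - y) * u t0 y) :=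
      mul_le_mul_of_nonneg_left hkey hd.le
    rw [hkdef] at hutle
    nlinarith
  have P1 : ∀ t x, 0 ≤ t → t ≤ T → g t ≤ x → x ≤ h t → 0 ≤ u t x := by
    intro t x h1 h2 h3 h4
    have h6 : Real.exp (-k * t0) * u t0 x0 ≤ Real.exp (-k * t) * u t x :=
      hmin (t, x) ⟨h1, h2, h3, h4⟩
    have h5 : Real.exp (-k * t) * 0 ≤ Real.exp (-k * t) * u t x := by
      rw [mul_zero]; exact le_trans hv0 h6
    exact le_of_mul_le_mul_left h5 (Real.exp_pos _)
  refine ⟨P1, ?_⟩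
  -- Part 2: strict positivity
  rintro ⟨xs, hxs1, hxs2, hxsne⟩ t x ht htT hgx hxh
  rcases (P1 t x ht.le htT hgx.le hxh.le).lt_or_eq with hpos | heq0
  · exact hpos
  exfalso
  obtain ⟨K, hKdef⟩ : ∃ K : ℝ, K = d + C := ⟨_, rfl⟩
  have hintnn : ∀ s y, 0 ≤ s → s ≤ T → 0 ≤ ∫ z in g s..h s, J (y - z) * u s z := by
    intro s y h1 h2
    exact intervalIntegral.integral_nonneg (hgh s h1 h2).le
      (fun z hz => mul_nonneg (hJnn _) (P1 s z h1 h2 hz.1 hz.2))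
  have hmono : ∀ x1 a b, 0 ≤ a → a ≤ b → b ≤ T → g a ≤ x1 → x1 ≤ h a →
      (∀ r, a < r → r ≤ b → g r < x1 ∧ x1 < h r) →
      MonotoneOn (fun r => Real.exp (K * r) * u r x1) (Icc a b) := by
    intro x1 a b h1 h2 h3 h4 h5 h6
    have hbnd : ∀ r, r ∈ Icc a b → g r ≤ x1 ∧ x1 ≤ h r := by
      intro r hr
      rcases eq_or_lt_of_le hr.1 with rfl | hlt
      · exact ⟨h4, h5⟩
      · exact ⟨(h6 r hlt hr.2).1.le, (h6 r hlt hr.2).2.le⟩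
    have hder : ∀ r, r ∈ Ioo a b → HasDerivAt (fun r => Real.exp (K * r) * u r x1)
        (Real.exp (K * r) * K * u r x1 + Real.exp (K * r) * ut r x1) r := by
      intro r hr
      have h7 : HasDerivAt (fun r : ℝ => K * r) K r := by
        simpa using (hasDerivAt_id r).const_mul K
      exact (h7.exp).mul (hderiv r x1 (h1.trans_lt hr.1) (hr.2.le.trans h3)
        (h6 r hr.1 hr.2.le).1 (h6 r hr.1 hr.2.le).2)
    apply monotoneOn_of_deriv_nonneg (convex_Icc a b)
    · exact (Real.continuous_exp.comp (continuous_const.mul continuous_id)).continuousOn.mul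
        (huct x1 a b h1 h3 hbnd)
    · rw [interior_Icc]
      exact fun r hr => (hder r hr).differentiableAt.differentiableWithinAt
    · rw [interior_Icc]
      intro r hr
      rw [(hder r hr).deriv]
      have hrpos : 0 < r := h1.trans_lt hr.1
      have hrT : r ≤ T := hr.2.le.trans h3
      have hgr := (h6 r hr.1 hr.2.le).1
      have hhr := (h6 r hr.1 hr.2.le).2
      have hint := hintnn r x1 hrpos.le hrT
      have hun : 0 ≤ u r x1 := P1 r x1 hrpos.le hrT hgr.le hhr.le
      have hcc := hcC r x1 hrpos hrT hgr hhr
      have hi := hineq r x1 hrpos hrT hgr hhr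
      have h8 : 0 ≤ K * u r x1 + ut r x1 := by
        rw [hKdef]
        nlinarith [mul_nonneg hd.le hint,
          mul_nonneg (show (0:ℝ) ≤ c r x1 + C by linarith [hcc.1]) hun]
      have h9 : Real.exp (K * r) * K * u r x1 + Real.exp (K * r) * ut r x1
          = Real.exp (K * r) * (K * u r x1 + ut r x1) := by ring
      rw [h9]
      exact mul_nonneg (Real.exp_pos _).le h8
  have hzb : ∀ x1 t1 s, 0 ≤ s → s ≤ t1 → t1 ≤ T → g s ≤ x1 → x1 ≤ h s →
      (∀ r, s < r → r ≤ t1 → g r < x1 ∧ x1 < h r) → u t1 x1 = 0 → u s x1 = 0 := by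
    intro x1 t1 s h1 h2 h3 h4 h5 h6 h7
    have hm := hmono x1 s t1 h1 h2 h3 h4 h5 h6
      (Set.left_mem_Icc.mpr h2) (Set.right_mem_Icc.mpr h2) h2
    simp only [h7, mul_zero] at hm
    have hun : 0 ≤ u s x1 := P1 s x1 h1 (h2.trans h3) h4 h5
    have hle : u s x1 ≤ 0 := by nlinarith [Real.exp_pos (K * s)]
    linarith
  obtain ⟨δ, hδpos, hJδ⟩ : ∃ δ > 0, ∀ z : ℝ, |z| < δ → 0 < J z := by
    have h1 : J ⁻¹' (Ioi 0) ∈ 𝓝 (0:ℝ) :=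
      hJc.continuousAt.preimage_mem_nhds (isOpen_Ioi.mem_nhds hJ0)
    obtain ⟨ε, hεpos, hball⟩ := Metric.mem_nhds_iff.mp h1
    refine ⟨ε, hεpos, fun z hz => ?_⟩
    exact hball (by rw [Metric.mem_ball, Real.dist_eq, sub_zero]; exact hz)
  have hut0 : ∀ s x2, 0 < s → s ≤ T → g s < x2 → x2 < h s → u s x2 = 0 → ut s x2 = 0 := by
    intro s x2 hs1 hs2 hs3 hs4 hu0
    obtain ⟨a, ha1, ha2, ha3, ha4⟩ := hleft s x2 hs1 hs2 hs3 hs4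
    have hzr : ∀ r, r ∈ Icc a s → u r x2 = 0 := by
      intro r hr
      refine hzb x2 s r (ha1.le.trans hr.1) hr.2 hs2 ?_ ?_ ?_ hu0
      · exact le_trans (hmg a r ha1.le hr.1 (hr.2.trans hs2)) ha3.le
      · exact le_trans ha4.le (hmh a r ha1.le hr.1 (hr.2.trans hs2))
      · intro ρ hρ1 hρ2
        constructor
        · calc g ρ ≤ g a := hmg a ρ ha1.le (hr.1.trans hρ1.le) (hρ2.trans hs2)
            _ < x2 := ha3
        · calc x2 < h a := ha4
            _ ≤ h ρ := hmh a ρ ha1.le (hr.1.trans hρ1.le) (hρ2.trans hs2)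
    have T1 : Tendsto (slope (fun r => u r x2) s) (𝓝[<] s) (𝓝 (ut s x2)) :=
      (hasDerivAt_iff_tendsto_slope.mp (hderiv s x2 hs1 hs2 hs3 hs4)).mono_left
        (nhdsWithin_mono _ (fun y hy => ne_of_lt hy))
    have T2 : Tendsto (slope (fun r => u r x2) s) (𝓝[<] s) (𝓝 0) := by
      apply tendsto_const_nhds.congr'
      filter_upwards [Ioo_mem_nhdsLT_of_mem (show s ∈ Ioc a s from ⟨ha2, le_rfl⟩)] with r hr
      have hz1 : u r x2 = 0 := hzr r ⟨hr.1.le, hr.2.le⟩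
      simp only [slope_def_field, hz1, hu0, sub_zero, zero_div]
    exact tendsto_nhds_unique T1 T2
  have hvanish : ∀ s x2, 0 < s → s ≤ T → g s < x2 → x2 < h s → u s x2 = 0 →
      ∀ y, g s < y → y < h s → |y - x2| < δ → u s y = 0 := by
    intro s x2 hs1 hs2 hs3 hs4 hu0 y hy1 hy2 hyδ
    by_contra hne
    have hypos : 0 < u s y := (P1 s y hs1.le hs2 hy1.le hy2.le).lt_of_ne (Ne.symm hne)
    have hJpos : 0 < J (x2 - y) := hJδ _ (by rw [abs_sub_comm] at hyδ; exact hyδ)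
    have hut := hut0 s x2 hs1 hs2 hs3 hs4 hu0
    have hi := hineq s x2 hs1 hs2 hs3 hs4
    rw [hu0, hut] at hi
    simp only [mul_zero, sub_zero, add_zero] at hi
    have hIle : (∫ z in g s..h s, J (x2 - z) * u s z) ≤ 0 := by nlinarith
    have hfc : ContinuousOn (fun z => J (x2 - z) * u s z) (Icc (g s) (h s)) :=
      ((hJc.comp (continuous_const.sub continuous_id)).continuousOn).mul (hucx s hs1.le hs2)
    have hfnn : ∀ z, z ∈ Icc (g s) (h s) → 0 ≤ J (x2 - z) * u s z :=
      fun z hz => mul_nonneg (hJnn _) (P1 s z hs1.le hs2 hz.1 hz.2)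
    have hfy : 0 < J (x2 - y) * u s y := mul_pos hJpos hypos
    have hfca : ContinuousAt (fun z => J (x2 - z) * u s z) y :=
      hfc.continuousAt (Icc_mem_nhds hy1 hy2)
    have h1 : (fun z => J (x2 - z) * u s z) ⁻¹' (Ioi 0) ∈ 𝓝 y :=
      hfca.preimage_mem_nhds (isOpen_Ioi.mem_nhds hfy)
    obtain ⟨ε0, hε0, hball⟩ := Metric.mem_nhds_iff.mp h1
    set ε : ℝ := min (ε0 / 2) (min ((y - g s) / 2) ((h s - y) / 2)) with hεdef
    have hεpos : 0 < ε := by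
      apply lt_min (by linarith)
      exact lt_min (by linarith) (by linarith)
    have hεg : g s < y - ε := by
      have : ε ≤ (y - g s) / 2 := (min_le_right _ _).trans (min_le_left _ _)
      linarith
    have hεh : y + ε < h s := by
      have : ε ≤ (h s - y) / 2 := (min_le_right _ _).trans (min_le_right _ _)
      linarith
    have hεb : ∀ z, z ∈ Ioo (y - ε) (y + ε) → 0 < J (x2 - z) * u s z := by
      intro z hz
      have hz2 : z ∈ Metric.ball y ε0 := by
        rw [Metric.mem_ball, Real.dist_eq]
        have hε2 : ε ≤ ε0 / 2 := min_le_left _ _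
        rw [abs_lt]
        constructor
        · linarith [hz.1]
        · linarith [hz.2]
      exact hball hz2
    have hab : g s ≤ h s := (hgh s hs1.le hs2).le
    have hIf : IntervalIntegrable (fun z => J (x2 - z) * u s z) volume (g s) (h s) :=
      hfc.intervalIntegrable_of_Icc hab
    have hI1 : IntervalIntegrable (fun z => J (x2 - z) * u s z) volume (g s) (y - ε) := by
      apply hIf.mono_set
      rw [uIcc_of_le hab, uIcc_of_le (by linarith : g s ≤ y - ε)]
      exact Icc_subset_Icc le_rfl (by linarith)
    have hI2 : IntervalIntegrable (fun z => J (x2 - z) * u s z) volume (y - ε) (y + ε) := by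
      apply hIf.mono_set
      rw [uIcc_of_le hab, uIcc_of_le (by linarith : y - ε ≤ y + ε)]
      exact Icc_subset_Icc (by linarith) (by linarith)
    have hI3 : IntervalIntegrable (fun z => J (x2 - z) * u s z) volume (y + ε) (h s) := by
      apply hIf.mono_set
      rw [uIcc_of_le hab, uIcc_of_le (by linarith : y + ε ≤ h s)]
      exact Icc_subset_Icc (by linarith) le_rfl
    have hI12 : IntervalIntegrable (fun z => J (x2 - z) * u s z) volume (g s) (y + ε) := by
      apply hIf.mono_set
      rw [uIcc_of_le hab, uIcc_of_le (by linarith : g s ≤ y + ε)]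
      exact Icc_subset_Icc le_rfl (by linarith)
    have e1 : (∫ z in g s..(y - ε), J (x2 - z) * u s z)
        + (∫ z in (y - ε)..(y + ε), J (x2 - z) * u s z)
        = ∫ z in g s..(y + ε), J (x2 - z) * u s z :=
      intervalIntegral.integral_add_adjacent_intervals hI1 hI2
    have e2 : (∫ z in g s..(y + ε), J (x2 - z) * u s z)
        + (∫ z in (y + ε)..h s, J (x2 - z) * u s z)
        = ∫ z in g s..h s, J (x2 - z) * u s z :=
      intervalIntegral.integral_add_adjacent_intervals hI12 hI3
    have hpos2 : 0 < ∫ z in (y - ε)..(y + ε), J (x2 - z) * u s z :=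
      intervalIntegral.intervalIntegral_pos_of_pos_on hI2 hεb (by linarith)
    have hnn1 : 0 ≤ ∫ z in g s..(y - ε), J (x2 - z) * u s z :=
      intervalIntegral.integral_nonneg (by linarith)
        (fun z hz => hfnn z ⟨hz.1, by linarith [hz.2]⟩)
    have hnn3 : 0 ≤ ∫ z in (y + ε)..h s, J (x2 - z) * u s z :=
      intervalIntegral.integral_nonneg (by linarith)
        (fun z hz => hfnn z ⟨by linarith [hz.1], hz.2⟩)
    linarith
  have hspread : ∀ s x1, 0 < s → s ≤ T → g s < x1 → x1 < h s → u s x1 = 0 →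
      ∀ y, y ∈ Ioo (g s) (h s) → u s y = 0 := by
    intro s x1 hs1 hs2 hs3 hs4 hu0
    set Z : Set ℝ := {y | y ∈ Ioo (g s) (h s) ∧ u s y = 0} with hZdef
    have hZopen : IsOpen Z := by
      rw [Metric.isOpen_iff]
      rintro x2 ⟨hx2b, hx2z⟩
      refine ⟨min δ (min (x2 - g s) (h s - x2)), ?_, ?_⟩
      · exact lt_min hδpos (lt_min (by linarith [hx2b.1]) (by linarith [hx2b.2]))
      · intro y hy
        rw [Metric.mem_ball, Real.dist_eq] at hy
        have hδ' : |y - x2| < δ := lt_of_lt_of_le hy (min_le_left _ _)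
        have h1 : |y - x2| < x2 - g s :=
          lt_of_lt_of_le hy ((min_le_right _ _).trans (min_le_left _ _))
        have h2 : |y - x2| < h s - x2 :=
          lt_of_lt_of_le hy ((min_le_right _ _).trans (min_le_right _ _))
        rw [abs_lt] at h1 h2
        have hy1 : g s < y := by linarith [h1.1]
        have hy2 : y < h s := by linarith [h2.2]
        exact ⟨⟨hy1, hy2⟩, hvanish s x2 hs1 hs2 hx2b.1 hx2b.2 hx2z y hy1 hy2 hδ'⟩
    have hsub : Ioo (g s) (h s) ⊆ Z := by
      apply isPreconnected_Ioo.subset_of_closure_inter_subset hZopen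
        ⟨x1, ⟨hs3, hs4⟩, ⟨hs3, hs4⟩, hu0⟩
      rintro y ⟨hyc, hyo⟩
      refine ⟨hyo, ?_⟩
      have hca : ContinuousAt (fun z => u s z) y :=
        (hucx s hs1.le hs2).continuousAt (Icc_mem_nhds hyo.1 hyo.2)
      by_contra hne
      have h1 : (fun z => u s z) ⁻¹' {(0:ℝ)}ᶜ ∈ 𝓝 y :=
        hca.preimage_mem_nhds (isOpen_compl_singleton.mem_nhds hne)
      obtain ⟨z, hz⟩ := mem_closure_iff_nhds.mp hyc _ h1
      exact hz.1 hz.2.2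
    intro y hy
    exact (hsub hy).2
  have hall : ∀ y, y ∈ Ioo (g t) (h t) → u t y = 0 := hspread t x ht htT hgx hxh heq0.symm
  have hzero0 : ∀ y, -h0 < y → y < h0 → u 0 y = 0 := by
    intro y hy1 hy2
    have hyIoo : y ∈ Ioo (g t) (h t) :=
      ⟨by linarith [hgT t ht.le htT], by linarith [hhT t ht.le htT]⟩
    refine hzb y t 0 le_rfl ht.le htT (by rw [hg00]; linarith) (by rw [hh00]; linarith)
      ?_ (hall y hyIoo)
    intro r hr1 hr2
    constructor
    · have := hmg' 0 r le_rfl hr1 (hr2.trans htT)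
      rw [hg00] at this; linarith
    · have := hmh' 0 r le_rfl hr1 (hr2.trans htT)
      rw [hh00] at this; linarith
  apply hxsne
  have hu0c : ContinuousOn (fun y => u 0 y) (Icc (-h0) h0) := by
    have := hucx 0 le_rfl hT.le
    rw [hg00, hh00] at this; exact this
  have hnb : (𝓝[Ioo (-h0) h0] xs).NeBot := by
    rw [← mem_closure_iff_nhdsWithin_neBot, closure_Ioo (by linarith : (-h0) ≠ h0)]
    exact ⟨hxs1, hxs2⟩
  have T1 : Tendsto (fun y => u 0 y) (𝓝[Ioo (-h0) h0] xs) (𝓝 (u 0 xs)) :=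
    (hu0c xs ⟨hxs1, hxs2⟩).mono_left (nhdsWithin_mono _ Ioo_subset_Icc_self)
  have T2 : Tendsto (fun y => u 0 y) (𝓝[Ioo (-h0) h0] xs) (𝓝 0) := by
    apply tendsto_const_nhds.congr'
    filter_upwards [self_mem_nhdsWithin] with y hy
    exact (hzero0 y hy.1 hy.2).symm
  exact tendsto_nhds_unique T1 T2
end

section
/- (Exponential bound on the range) Let (u, g, h) be a solution of the nonlocal free boundary problem on (0,T] with 0 < u(t,x) ≤ M0 := max{ sup_{[−h0,h0]} u0, K0 } for 0 < t ≤ T and g(t) < x < h(t). Then h(t) − g(t) ≤ 2 h0 e^{μ M0 t} for all t ∈ (0,T]. -/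
open MeasureTheory Set Filter Topology

/-- A solution of the nonlocal diffusion free boundary problem on the time
interval `(0, T]`: `u` is the density, `ut` its time derivative, `g, h` the
free boundaries. -/
def IsFBSolOn (d μ h0 T : ℝ) (J : ℝ → ℝ) (f : ℝ → ℝ → ℝ → ℝ)
    (u0 : ℝ → ℝ) (u ut : ℝ → ℝ → ℝ) (g h : ℝ → ℝ) : Prop :=
  ContinuousOn g (Set.Icc 0 T) ∧ ContinuousOn h (Set.Icc 0 T) ∧
  g 0 = -h0 ∧ h 0 = h0 ∧ (∀ t, 0 ≤ t → t ≤ T → g t < h t) ∧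
  (∀ t, 0 < t → t ≤ T →
    HasDerivAt h (μ * ∫ x in g t..h t, (∫ y in Set.Ioi (h t), J (x - y)) * u t x) t) ∧
  (∀ t, 0 < t → t ≤ T →
    HasDerivAt g (-(μ * ∫ x in g t..h t, (∫ y in Set.Iio (g t), J (x - y)) * u t x)) t) ∧
  ContinuousOn (fun p : ℝ × ℝ => u p.1 p.2)
    {p : ℝ × ℝ | 0 ≤ p.1 ∧ p.1 ≤ T ∧ g p.1 ≤ p.2 ∧ p.2 ≤ h p.1} ∧
  ContinuousOn (fun p : ℝ × ℝ => ut p.1 p.2)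
    {p : ℝ × ℝ | 0 ≤ p.1 ∧ p.1 ≤ T ∧ g p.1 ≤ p.2 ∧ p.2 ≤ h p.1} ∧
  (∀ t x, 0 < t → t ≤ T → g t < x → x < h t →
    HasDerivAt (fun s => u s x) (ut t x) t ∧
    ut t x = d * (∫ y in g t..h t, J (x - y) * u t y) - d * u t x + f t x (u t x)) ∧
  (∀ t, 0 < t → t ≤ T → u t (g t) = 0 ∧ u t (h t) = 0) ∧
  (∀ x, -h0 ≤ x → x ≤ h0 → u 0 x = u0 x)

/-- **Exponential bound on the population range** (estimate (2.27) of Cao–Du–Li–Li). -/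
theorem range_exponential_bound
    (J : ℝ → ℝ) (hJc : Continuous J) (hJnn : ∀ x, 0 ≤ J x)
    (hJeven : ∀ x, J (-x) = J x) (hJbdd : BddAbove (Set.range J))
    (hJ0 : 0 < J 0) (hJint : Integrable J) (hJ1 : (∫ x, J x) = 1)
    (f : ℝ → ℝ → ℝ → ℝ)
    (hfc : ContinuousOn (fun p : ℝ × ℝ × ℝ => f p.1 p.2.1 p.2.2)
      {p : ℝ × ℝ × ℝ | 0 ≤ p.1 ∧ 0 ≤ p.2.2})
    (hf0 : ∀ t x, 0 ≤ t → f t x 0 = 0)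
    (hfLip : ∀ L > 0, ∃ K > 0, ∀ t x u1 u2, 0 ≤ t → u1 ∈ Set.Icc 0 L → u2 ∈ Set.Icc 0 L →
      |f t x u1 - f t x u2| ≤ K * |u1 - u2|)
    (K0 : ℝ) (hK0 : 0 < K0)
    (hfneg : ∀ t x u, 0 ≤ t → K0 ≤ u → f t x u < 0)
    (d μ h0 T : ℝ) (hd : 0 < d) (hμ : 0 < μ) (hh0 : 0 < h0) (hT : 0 < T)
    (u0 : ℝ → ℝ) (hu0c : ContinuousOn u0 (Set.Icc (-h0) h0))
    (hu0l : u0 (-h0) = 0) (hu0r : u0 h0 = 0)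
    (hu0pos : ∀ x, -h0 < x → x < h0 → 0 < u0 x)
    (u ut : ℝ → ℝ → ℝ) (g h : ℝ → ℝ)
    (hsol : IsFBSolOn d μ h0 T J f u0 u ut g h)
    (M0 : ℝ) (hM0 : M0 = max (sSup (u0 '' Set.Icc (-h0) h0)) K0)
    (hubd : ∀ t x, 0 < t → t ≤ T → g t < x → x < h t → 0 < u t x ∧ u t x ≤ M0) :
    ∀ t, 0 < t → t ≤ T → h t - g t ≤ 2 * h0 * Real.exp (μ * M0 * t) := by
  obtain ⟨hgc, hhc, hg0, hh0eq, hglth, hhd, hgd, huc, hutc, heq, hbc, hic⟩ := hsol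
  -- basic facts
  have hM0pos : 0 < M0 := lt_of_lt_of_le hK0 (hM0 ▸ le_max_right _ _)
  have hK : (0:ℝ) ≤ μ * M0 := le_of_lt (mul_pos hμ hM0pos)
  -- the primitive of J
  set F : ℝ → ℝ := fun c => ∫ z in Iic c, J z with hF
  have hFc : Continuous F := by
    have hFeq : F = fun c => (∫ z in Iic (0:ℝ), J z) + ∫ z in (0:ℝ)..c, J z := by
      funext c
      rw [← intervalIntegral.integral_Iic_sub_Iic hJint.integrableOn hJint.integrableOn]
      ring
    rw [hFeq]
    exact continuous_const.add (hJint.continuous_primitive 0)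
  have hFmono : Monotone F := fun c₁ c₂ hc => by
    exact setIntegral_mono_set hJint.integrableOn
      (Eventually.of_forall fun z => hJnn z) (HasSubset.Subset.eventuallyLE (Iic_subset_Iic.2 hc))
  have hFnn : ∀ c, 0 ≤ F c := fun c =>
    setIntegral_nonneg measurableSet_Iic fun z _ => hJnn z
  have hFle : ∀ c, F c ≤ 1 := fun c => by
    calc F c ≤ ∫ z, J z := setIntegral_le_integral hJint (Eventually.of_forall fun z => hJnn z)
    _ = 1 := hJ1
  -- substitution formulas
  have hsub : ∀ x : ℝ, MeasurePreserving (fun y : ℝ => x - y) volume volume :=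
    fun x => Measure.measurePreserving_sub_left volume x
  have hemb : ∀ x : ℝ, MeasurableEmbedding (fun y : ℝ => x - y) :=
    fun x => (MeasurableEquiv.subLeft x).measurableEmbedding
  have hAeq : ∀ x b : ℝ, (∫ y in Ioi b, J (x - y)) = F (x - b) := by
    intro x b
    have h1 := (hsub x).setIntegral_preimage_emb (hemb x) J (Iio (x - b))
    have hpre : (fun y : ℝ => x - y) ⁻¹' Iio (x - b) = Ioi b := by
      ext y; simp [sub_lt_sub_iff_left]
    rw [hpre] at h1
    rw [h1, hF]
    exact (integral_Iic_eq_integral_Iio (μ := volume) (f := J)).symm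
  have hBeq : ∀ x a : ℝ, (∫ y in Iio a, J (x - y)) = 1 - F (x - a) := by
    intro x a
    have h1 := (hsub x).setIntegral_preimage_emb (hemb x) J (Ioi (x - a))
    have hpre : (fun y : ℝ => x - y) ⁻¹' Ioi (x - a) = Iio a := by
      ext y; simp [sub_lt_sub_iff_left]
    rw [hpre] at h1
    rw [h1]
    have h2 := intervalIntegral.integral_Iic_add_Ioi (f := J) (b := x - a) hJint.integrableOn hJint.integrableOn
    rw [hJ1] at h2
    linarith [h2]
  -- the derivative estimate at each time s ∈ (0, T]
  have hderiv : ∀ s, 0 < s → s ≤ T →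
      HasDerivAt (fun r => h r - g r)
        ((μ * ∫ x in g s..h s, (∫ y in Ioi (h s), J (x - y)) * u s x) +
         (μ * ∫ x in g s..h s, (∫ y in Iio (g s), J (x - y)) * u s x)) s := by
    intro s hs hsT
    have := (hhd s hs hsT).sub (hgd s hs hsT)
    rw [sub_neg_eq_add] at this
    exact this
  have hbound : ∀ s, 0 < s → s ≤ T →
      (μ * ∫ x in g s..h s, (∫ y in Ioi (h s), J (x - y)) * u s x) +
      (μ * ∫ x in g s..h s, (∫ y in Iio (g s), J (x - y)) * u s x)
        ∈ Icc 0 ((μ * M0) * (h s - g s)) := by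
    intro s hs hsT
    set a := g s with ha
    set b := h s with hb
    have hab : a < b := hglth s (le_of_lt hs) hsT
    -- u s is continuous and within [0, M0] on [a, b]
    have husc : ContinuousOn (u s) (Icc a b) := by
      have : ContinuousOn (fun x => (fun p : ℝ × ℝ => u p.1 p.2) (s, x)) (Icc a b) :=
        huc.comp (Continuous.continuousOn (by continuity))
          (fun x hx => ⟨le_of_lt hs, hsT, hx.1, hx.2⟩)
      exact this
    have husb : ∀ x ∈ Icc a b, u s x ∈ Icc (0:ℝ) M0 := by
      intro x hx
      rcases eq_or_lt_of_le hx.1 with h1 | h1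
      · rw [← h1, (hbc s hs hsT).1]; exact ⟨le_refl _, le_of_lt hM0pos⟩
      rcases eq_or_lt_of_le hx.2 with h2 | h2
      · rw [h2, (hbc s hs hsT).2]; exact ⟨le_refl _, le_of_lt hM0pos⟩
      · obtain ⟨hp, hq⟩ := hubd s x hs hsT h1 h2
        exact ⟨le_of_lt hp, hq⟩
    -- the two kernel integrals, rewritten via F
    have hA : ∀ x, (∫ y in Ioi b, J (x - y)) = F (x - b) := fun x => hAeq x b
    have hB : ∀ x, (∫ y in Iio a, J (x - y)) = 1 - F (x - a) := fun x => hBeq x a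
    have hAcont : Continuous fun x => (∫ y in Ioi b, J (x - y)) := by
      simp only [hA]; exact hFc.comp (continuous_id.sub continuous_const)
    have hBcont : Continuous fun x => (∫ y in Iio a, J (x - y)) := by
      simp only [hB]; exact continuous_const.sub (hFc.comp (continuous_id.sub continuous_const))
    have hAnn : ∀ x, 0 ≤ (∫ y in Ioi b, J (x - y)) := fun x => by
      rw [hA]; exact hFnn _
    have hBnn : ∀ x, 0 ≤ (∫ y in Iio a, J (x - y)) := fun x => by
      rw [hB]; linarith [hFle (x - a)]
    have hABle : ∀ x, (∫ y in Ioi b, J (x - y)) + (∫ y in Iio a, J (x - y)) ≤ 1 := fun x => by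
      rw [hA, hB]
      have := hFmono (show x - b ≤ x - a by linarith)
      linarith
    -- interval integrability
    have hI1 : IntervalIntegrable (fun x => (∫ y in Ioi b, J (x - y)) * u s x) volume a b := by
      apply ContinuousOn.intervalIntegrable
      rw [uIcc_of_le (le_of_lt hab)]
      exact hAcont.continuousOn.mul husc
    have hI2 : IntervalIntegrable (fun x => (∫ y in Iio a, J (x - y)) * u s x) volume a b := by
      apply ContinuousOn.intervalIntegrable
      rw [uIcc_of_le (le_of_lt hab)]
      exact hBcont.continuousOn.mul husc
    have hI12 : IntervalIntegrable
        (fun x => ((∫ y in Ioi b, J (x - y)) + (∫ y in Iio a, J (x - y))) * u s x) volume a b := by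
      apply ContinuousOn.intervalIntegrable
      rw [uIcc_of_le (le_of_lt hab)]
      exact (hAcont.add hBcont).continuousOn.mul husc
    constructor
    · have h1 : 0 ≤ ∫ x in a..b, (∫ y in Ioi b, J (x - y)) * u s x :=
        intervalIntegral.integral_nonneg (le_of_lt hab)
          (fun x hx => mul_nonneg (hAnn x) (husb x hx).1)
      have h2 : 0 ≤ ∫ x in a..b, (∫ y in Iio a, J (x - y)) * u s x :=
        intervalIntegral.integral_nonneg (le_of_lt hab)
          (fun x hx => mul_nonneg (hBnn x) (husb x hx).1)
      have hμ' := le_of_lt hμ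
      positivity
    · have hsum : (∫ x in a..b, (∫ y in Ioi b, J (x - y)) * u s x) +
          (∫ x in a..b, (∫ y in Iio a, J (x - y)) * u s x) =
          ∫ x in a..b, ((∫ y in Ioi b, J (x - y)) + (∫ y in Iio a, J (x - y))) * u s x := by
        rw [← intervalIntegral.integral_add hI1 hI2]
        congr 1; funext x; ring
      have hle : (∫ x in a..b, ((∫ y in Ioi b, J (x - y)) + (∫ y in Iio a, J (x - y))) * u s x)
          ≤ ∫ _x in a..b, M0 := by
        apply intervalIntegral.integral_mono_on (le_of_lt hab) hI12 intervalIntegrable_const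
        intro x hx
        calc ((∫ y in Ioi b, J (x - y)) + (∫ y in Iio a, J (x - y))) * u s x
            ≤ u s x := mul_le_of_le_one_left (husb x hx).1 (hABle x)
          _ ≤ M0 := (husb x hx).2
      rw [intervalIntegral.integral_const, smul_eq_mul] at hle
      have : (∫ x in a..b, (∫ y in Ioi b, J (x - y)) * u s x) +
          (∫ x in a..b, (∫ y in Iio a, J (x - y)) * u s x) ≤ M0 * (b - a) := by
        rw [hsum]
        calc (∫ x in a..b, ((∫ y in Ioi b, J (x - y)) + (∫ y in Iio a, J (x - y))) * u s x)
            ≤ (b - a) * M0 := hle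
          _ = M0 * (b - a) := by ring
      calc (μ * ∫ x in a..b, (∫ y in Ioi b, J (x - y)) * u s x) +
            (μ * ∫ x in a..b, (∫ y in Iio a, J (x - y)) * u s x)
          = μ * ((∫ x in a..b, (∫ y in Ioi b, J (x - y)) * u s x) +
              (∫ x in a..b, (∫ y in Iio a, J (x - y)) * u s x)) := by ring
        _ ≤ μ * (M0 * (b - a)) := by
            exact mul_le_mul_of_nonneg_left this (le_of_lt hμ)
        _ = (μ * M0) * (b - a) := by ring
  -- Gronwall on [a, t] for each a ∈ (0, t)
  intro t ht htT
  have key : ∀ a ∈ Ioo (0:ℝ) t, h t - g t ≤ (h a - g a) * Real.exp ((μ * M0) * (t - a)) := by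
    intro a haI
    obtain ⟨ha0, hat⟩ := haI
    set φ : ℝ → ℝ := fun r => h r - g r with hφ
    set D : ℝ → ℝ := fun r =>
      (μ * ∫ x in g r..h r, (∫ y in Ioi (h r), J (x - y)) * u r x) +
      (μ * ∫ x in g r..h r, (∫ y in Iio (g r), J (x - y)) * u r x) with hDdef
    have hsubI : Icc a t ⊆ Icc 0 T := Icc_subset_Icc (le_of_lt ha0) htT
    have hφcont : ContinuousOn φ (Icc a t) :=
      (hhc.mono hsubI).sub (hgc.mono hsubI)
    have hφd : ∀ s ∈ Ico a t, HasDerivWithinAt φ (D s) (Ici s) s := by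
      intro s hsI
      exact (hderiv s (lt_of_lt_of_le ha0 hsI.1) (le_trans (le_of_lt hsI.2) htT)).hasDerivWithinAt
    have hφbd : ∀ s ∈ Ico a t, ‖D s‖ ≤ (μ * M0) * ‖φ s‖ + 0 := by
      intro s hsI
      have hs0 : 0 < s := lt_of_lt_of_le ha0 hsI.1
      have hsT : s ≤ T := le_trans (le_of_lt hsI.2) htT
      obtain ⟨hD0, hDle⟩ := hbound s hs0 hsT
      have hφpos : 0 < φ s := sub_pos.2 (hglth s (le_of_lt hs0) hsT)
      rw [Real.norm_eq_abs, Real.norm_eq_abs, abs_of_nonneg hD0, abs_of_pos hφpos, add_zero]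
      exact hDle
    have hφa : ‖φ a‖ ≤ h a - g a := by
      have : 0 < φ a := sub_pos.2 (hglth a (le_of_lt ha0) (le_trans (le_of_lt hat) htT))
      rw [Real.norm_eq_abs, abs_of_pos this]
    have := norm_le_gronwallBound_of_norm_deriv_right_le hφcont hφd hφa hφbd t
      ⟨le_of_lt hat, le_refl t⟩
    rw [gronwallBound_ε0, Real.norm_eq_abs] at this
    calc h t - g t ≤ |h t - g t| := le_abs_self _
      _ ≤ (h a - g a) * Real.exp ((μ * M0) * (t - a)) := this
  -- take the limit a → 0⁺
  have hne : (𝓝[Ioo (0:ℝ) t] 0).NeBot := left_nhdsWithin_Ioo_neBot ht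
  have hIccsub : Ioo (0:ℝ) t ⊆ Icc 0 T := fun x hx => ⟨le_of_lt hx.1, le_trans (le_of_lt hx.2) htT⟩
  have htend : Tendsto (fun a => (h a - g a) * Real.exp ((μ * M0) * (t - a)))
      (𝓝[Ioo (0:ℝ) t] 0) (𝓝 (2 * h0 * Real.exp (μ * M0 * t))) := by
    have hmem : (0:ℝ) ∈ Icc (0:ℝ) T := ⟨le_refl 0, le_of_lt hT⟩
    have hh' : ContinuousWithinAt h (Ioo (0:ℝ) t) 0 := (hhc 0 hmem).mono hIccsub
    have hg' : ContinuousWithinAt g (Ioo (0:ℝ) t) 0 := (hgc 0 hmem).mono hIccsub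
    have hexp : ContinuousWithinAt (fun a => Real.exp ((μ * M0) * (t - a))) (Ioo (0:ℝ) t) 0 :=
      ((Real.continuous_exp.comp (continuous_const.mul
        (continuous_const.sub continuous_id))).continuousWithinAt)
    have h2 := ((hh'.sub hg').mul hexp).tendsto
    convert h2 using 2
    · rfl
    change _ = (h 0 - g 0) * Real.exp ((μ * M0) * (t - 0))
    simp only [hh0eq, hg0, sub_zero]
    ring
  have hev : ∀ᶠ a in 𝓝[Ioo (0:ℝ) t] 0,
      h t - g t ≤ (h a - g a) * Real.exp ((μ * M0) * (t - a)) :=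
    eventually_mem_nhdsWithin.mono fun a ha => key a ha
  exact ge_of_tendsto htend hev
end

section
/- (Maximum principle on a fixed interval) Let d > 0, h0 > 0, T > 0. Suppose u and ∂ₜu are continuous on [0,T] × [−h0,h0], c is a bounded (measurable) function on [0,T] × [−h0,h0], and: ∂ₜu(t,x) ≥ d∫_{−h0}^{h0} J(x−y) u(t,y) dy − d·u(t,x) + c(t,x)·u(t,x) for all t ∈ (0,T] and x ∈ [−h0,h0], with u(0,x) ≥ 0 for x ∈ [−h0,h0]. Then u(t,x) ≥ 0 for all 0 ≤ t ≤ T and x ∈ [−h0,h0]. Moreover, if u(0,·) is not identically zero on [−h0,h0], then u(t,x) > 0 for all t ∈ (0,T] and x ∈ [−h0,h0]. -/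
open MeasureTheory Set Filter Topology

lemma deriv_nonpos_of_min {f : ℝ → ℝ} {f' t0 : ℝ} (hd : HasDerivAt f f' t0) (ht0 : 0 < t0)
    (hmin : ∀ t ∈ Set.Icc 0 t0, f t0 ≤ f t) : f' ≤ 0 := by
  have h := hasDerivAt_iff_tendsto_slope.mp hd
  have h2 : Tendsto (slope f t0) (𝓝[<] t0) (𝓝 f') :=
    h.mono_left (nhdsWithin_mono _ (fun x hx => ne_of_lt hx))
  refine le_of_tendsto h2 ?_
  filter_upwards [Ioo_mem_nhdsLT_of_mem (Set.mem_Ioc.mpr ⟨ht0, le_refl t0⟩)] with t ht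
  have h1 : f t0 ≤ f t := hmin t ⟨ht.1.le, ht.2.le⟩
  have h3 : t - t0 < 0 := by linarith [ht.2]
  rw [slope_def_field]
  exact div_nonpos_of_nonneg_of_nonpos (by linarith) (by linarith)

lemma kernel_int_le_one (J : ℝ → ℝ) (hJnn : ∀ x, 0 ≤ J x) (hJint : Integrable J)
    (hJ1 : (∫ x, J x) = 1) (h0 x : ℝ) (hh0 : 0 ≤ h0) :
    (∫ y in (-h0)..h0, J (x - y)) ≤ 1 := by
  rw [intervalIntegral.integral_comp_sub_left]
  rw [intervalIntegral.integral_of_le (by linarith)]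
  calc ∫ y in Set.Ioc (x - h0) (x - (-h0)), J y
      ≤ ∫ y, J y := setIntegral_le_integral hJint (ae_of_all _ hJnn)
    _ = 1 := hJ1

lemma eq_zero_of_intervalIntegral_eq_zero {f : ℝ → ℝ} {a b : ℝ} (hab : a < b)
    (hf : ContinuousOn f (Set.Icc a b)) (hnn : ∀ y ∈ Set.Icc a b, 0 ≤ f y)
    (hz : (∫ y in a..b, f y) = 0) : ∀ y ∈ Set.Icc a b, f y = 0 := by
  have hint : IntervalIntegrable f volume a b :=
    (by rw [Set.uIcc_of_le hab.le]; exact hf : ContinuousOn f (Set.uIcc a b)).intervalIntegrable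
  rw [intervalIntegral.integral_of_le hab.le] at hz
  have hae : f =ᵐ[volume.restrict (Set.Ioc a b)] 0 := by
    refine (integral_eq_zero_iff_of_nonneg_ae ?_ ?_).mp hz
    · exact ae_restrict_of_forall_mem measurableSet_Ioc
        (fun y hy => hnn y (Set.Ioc_subset_Icc_self hy))
    · exact hint.1
  have hae' : f =ᵐ[volume.restrict (Set.Ioo a b)] 0 :=
    ae_restrict_of_ae_restrict_of_subset Set.Ioo_subset_Ioc_self hae
  have heq : Set.EqOn f 0 (Set.Ioo a b) :=
    Measure.eqOn_open_of_ae_eq hae' isOpen_Ioo (hf.mono Set.Ioo_subset_Icc_self)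
      continuousOn_const
  intro y hy
  have hne : (𝓝[Set.Ioo a b] y).NeBot := by
    rw [← mem_closure_iff_nhdsWithin_neBot, closure_Ioo hab.ne]
    exact hy
  have h1 : Tendsto f (𝓝[Set.Ioo a b] y) (𝓝 (f y)) :=
    (hf y hy).mono_left (nhdsWithin_mono _ Set.Ioo_subset_Icc_self)
  have h2 : Tendsto f (𝓝[Set.Ioo a b] y) (𝓝 0) := by
    refine tendsto_const_nhds.congr' ?_
    filter_upwards [eventually_mem_nhdsWithin] with z hz
    exact (heq hz).symm
  exact tendsto_nhds_unique h1 h2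

set_option maxHeartbeats 1000000 in
/-- **Maximum principle on a fixed interval** (Lemma 3.4 of Cao–Du–Li–Li). -/
theorem maximum_principle_fixed_interval
    (J : ℝ → ℝ) (hJc : Continuous J) (hJnn : ∀ x, 0 ≤ J x)
    (hJeven : ∀ x, J (-x) = J x) (hJbdd : BddAbove (Set.range J))
    (hJ0 : 0 < J 0) (hJint : Integrable J) (hJ1 : (∫ x, J x) = 1)
    (d h0 T : ℝ) (hd : 0 < d) (hh0 : 0 < h0) (hT : 0 < T)
    (u ut c : ℝ → ℝ → ℝ)
    (huc : ContinuousOn (fun p : ℝ × ℝ => u p.1 p.2) (Set.Icc 0 T ×ˢ Set.Icc (-h0) h0))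
    (hutc : ContinuousOn (fun p : ℝ × ℝ => ut p.1 p.2) (Set.Icc 0 T ×ˢ Set.Icc (-h0) h0))
    (hderiv : ∀ t x, 0 < t → t ≤ T → -h0 ≤ x → x ≤ h0 →
      HasDerivAt (fun s => u s x) (ut t x) t)
    (hcbdd : ∃ C, ∀ t x, 0 ≤ t → t ≤ T → -h0 ≤ x → x ≤ h0 → |c t x| ≤ C)
    (hineq : ∀ t x, 0 < t → t ≤ T → -h0 ≤ x → x ≤ h0 →
      d * (∫ y in (-h0)..h0, J (x - y) * u t y) - d * u t x + c t x * u t x ≤ ut t x)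
    (hinit : ∀ x, -h0 ≤ x → x ≤ h0 → 0 ≤ u 0 x) :
    (∀ t x, 0 ≤ t → t ≤ T → -h0 ≤ x → x ≤ h0 → 0 ≤ u t x) ∧
    ((∃ x, -h0 ≤ x ∧ x ≤ h0 ∧ u 0 x ≠ 0) →
      ∀ t x, 0 < t → t ≤ T → -h0 ≤ x → x ≤ h0 → 0 < u t x) := by
  obtain ⟨C0, hC0⟩ := hcbdd
  set C := max C0 0 with hCdef
  have hCb : ∀ t x, 0 ≤ t → t ≤ T → -h0 ≤ x → x ≤ h0 → |c t x| ≤ C :=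
    fun t x h1 h2 h3 h4 => le_trans (hC0 t x h1 h2 h3 h4) (le_max_left _ _)
  have hCnn : (0:ℝ) ≤ C := le_max_right _ _
  -- continuity of u in each variable
  have hcu_x : ∀ t, 0 ≤ t → t ≤ T → ContinuousOn (fun y => u t y) (Set.Icc (-h0) h0) := by
    intro t h1 h2
    exact huc.comp (continuous_const.prodMk continuous_id).continuousOn
      (fun y hy => ⟨⟨h1, h2⟩, hy⟩)
  have hcu_t : ∀ x, -h0 ≤ x → x ≤ h0 → ContinuousOn (fun s => u s x) (Set.Icc 0 T) := by
    intro x h1 h2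
    exact huc.comp (continuous_id.prodMk continuous_const).continuousOn
      (fun s hs => ⟨hs, ⟨h1, h2⟩⟩)
  -- Part 1
  have part1 : ∀ t x, 0 ≤ t → t ≤ T → -h0 ≤ x → x ≤ h0 → 0 ≤ u t x := by
    set lam : ℝ := C + 1 with hlam
    set K := Set.Icc (0:ℝ) T ×ˢ Set.Icc (-h0) h0 with hK
    set v : ℝ × ℝ → ℝ := fun p => Real.exp (-lam * p.1) * u p.1 p.2 with hv
    have hvc : ContinuousOn v K :=
      ((Real.continuous_exp.comp (continuous_const.mul continuous_fst)).continuousOn).mul huc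
    have hKc : IsCompact K := isCompact_Icc.prod isCompact_Icc
    have hKne : K.Nonempty :=
      ⟨(0, 0), Set.mem_prod.mpr ⟨⟨le_refl 0, hT.le⟩, by constructor <;> simp <;> linarith⟩⟩
    obtain ⟨⟨t0, x0⟩, hp0K, hp0m⟩ := hKc.exists_isMinOn hKne hvc
    rw [Set.mem_prod] at hp0K
    obtain ⟨⟨ht01', ht02'⟩, hx01', hx02'⟩ := hp0K
    replace ht01 : (0:ℝ) ≤ t0 := ht01'
    replace ht02 : t0 ≤ T := ht02'
    replace hx01 : -h0 ≤ x0 := hx01'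
    replace hx02 : x0 ≤ h0 := hx02'
    have hmin : ∀ q ∈ K, v (t0, x0) ≤ v q := fun q hq => hp0m hq
    have hmnn : 0 ≤ v (t0, x0) := by
      by_contra hmneg
      push_neg at hmneg
      -- t0 > 0
      have ht0pos : 0 < t0 := by
        rcases eq_or_lt_of_le ht01 with h | h
        · exfalso
          have : 0 ≤ v (t0, x0) := by
            show 0 ≤ Real.exp (-lam * t0) * u t0 x0
            rw [← h]
            exact mul_nonneg (Real.exp_pos _).le (hinit x0 hx01 hx02)
          linarith
        · exact h
      -- derivative of s ↦ exp(-lam s) u s x0 at t0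
      have hexp : HasDerivAt (fun s : ℝ => Real.exp (-lam * s))
          (Real.exp (-lam * t0) * -lam) t0 := by
        simpa using ((hasDerivAt_id t0).const_mul (-lam)).exp
      have hu' := hderiv t0 x0 ht0pos ht02 hx01 hx02
      have hg : HasDerivAt (fun s => Real.exp (-lam * s) * u s x0)
          (Real.exp (-lam * t0) * -lam * u t0 x0 + Real.exp (-lam * t0) * ut t0 x0) t0 :=
        hexp.mul hu'
      have hgle : Real.exp (-lam * t0) * -lam * u t0 x0
          + Real.exp (-lam * t0) * ut t0 x0 ≤ 0 := by
        refine deriv_nonpos_of_min hg ht0pos ?_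
        intro t ht
        exact hmin (t, x0) ⟨⟨ht.1, le_trans ht.2 ht02⟩, ⟨hx01, hx02⟩⟩
      set E := Real.exp (-lam * t0) with hE
      have hEpos : 0 < E := Real.exp_pos _
      set I := ∫ y in (-h0)..h0, J (x0 - y) * u t0 y with hI
      set I0 := ∫ y in (-h0)..h0, J (x0 - y) with hI0
      have hI0nn : 0 ≤ I0 :=
        intervalIntegral.integral_nonneg (by linarith) (fun y _ => hJnn _)
      have hI0le : I0 ≤ 1 := kernel_int_le_one J hJnn hJint hJ1 h0 x0 hh0.le
      -- integrability
      have hcJ : ContinuousOn (fun y => J (x0 - y)) (Set.Icc (-h0) h0) :=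
        (hJc.comp (continuous_const.sub continuous_id)).continuousOn
      have hintu : IntervalIntegrable (fun y => J (x0 - y) * (E * u t0 y)) volume (-h0) h0 := by
        apply ContinuousOn.intervalIntegrable
        rw [Set.uIcc_of_le (by linarith : -h0 ≤ h0)]
        exact hcJ.mul (continuousOn_const.mul (hcu_x t0 ht01 ht02))
      have hintc : IntervalIntegrable (fun y => J (x0 - y) * v (t0, x0)) volume (-h0) h0 := by
        apply ContinuousOn.intervalIntegrable
        rw [Set.uIcc_of_le (by linarith : -h0 ≤ h0)]
        exact hcJ.mul continuousOn_const
      -- integral comparisons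
      have hcomp : (∫ y in (-h0)..h0, J (x0 - y) * v (t0, x0))
          ≤ ∫ y in (-h0)..h0, J (x0 - y) * (E * u t0 y) := by
        refine intervalIntegral.integral_mono_on (by linarith) hintc hintu ?_
        intro y hy
        refine mul_le_mul_of_nonneg_left ?_ (hJnn _)
        exact hmin (t0, y) ⟨⟨ht01, ht02⟩, hy⟩
      have hconst : (∫ y in (-h0)..h0, J (x0 - y) * v (t0, x0)) = I0 * v (t0, x0) := by
        rw [intervalIntegral.integral_mul_const]
      have hpull : (∫ y in (-h0)..h0, J (x0 - y) * (E * u t0 y)) = E * I := by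
        have h : (fun y => J (x0 - y) * (E * u t0 y)) = fun y => E * (J (x0 - y) * u t0 y) := by
          funext y; ring
        rw [h, intervalIntegral.integral_const_mul]
      have hvval : v (t0, x0) = E * u t0 x0 := rfl
      have hmneg' : E * u t0 x0 < 0 := by rw [← hvval]; exact hmneg
      have hA3 : I0 * (E * u t0 x0) ≤ E * I := by
        rw [← hvval, ← hconst, ← hpull] at *
        exact hcomp
      have hEIU : E * u t0 x0 ≤ E * I := by
        nlinarith [mul_nonneg (sub_nonneg.mpr hI0le) (neg_nonneg.mpr hmneg'.le)]
      have hdEIU : d * (E * u t0 x0) ≤ d * (E * I) := mul_le_mul_of_nonneg_left hEIU hd.le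
      have hineq0 := hineq t0 x0 ht0pos ht02 hx01 hx02
      have hA2 : E * (d * I - d * u t0 x0 + c t0 x0 * u t0 x0) ≤ E * ut t0 x0 :=
        mul_le_mul_of_nonneg_left hineq0 hEpos.le
      obtain ⟨hc1, hc2⟩ := abs_le.mp (hCb t0 x0 ht01 ht02 hx01 hx02)
      have hlam1 : 0 ≤ lam - 1 - c t0 x0 := by rw [hlam]; linarith
      have hprod : (lam - 1 - c t0 x0) * (E * u t0 x0) ≤ 0 :=
        mul_nonpos_iff.mpr (Or.inl ⟨hlam1, hmneg'.le⟩)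
      nlinarith [hgle, hA2, hdEIU, hprod, hmneg']
    -- conclude nonnegativity
    intro t x h1 h2 h3 h4
    have hvtx : 0 ≤ v (t, x) := le_trans hmnn (hmin (t, x) ⟨⟨h1, h2⟩, ⟨h3, h4⟩⟩)
    have : 0 ≤ Real.exp (-lam * t) * u t x := hvtx
    exact (mul_nonneg_iff_of_pos_left (Real.exp_pos _)).mp this
  refine ⟨part1, ?_⟩
  rintro ⟨xs, hxs1, hxs2, hxs3⟩
  have hus : 0 < u 0 xs := lt_of_le_of_ne (hinit xs hxs1 hxs2) (Ne.symm hxs3)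
  set k : ℝ := d + C with hk
  have hgderiv : ∀ x, -h0 ≤ x → x ≤ h0 → ∀ t, 0 < t → t ≤ T →
      HasDerivAt (fun s => Real.exp (k * s) * u s x)
        (Real.exp (k * t) * k * u t x + Real.exp (k * t) * ut t x) t := by
    intro x h1 h2 t h3 h4
    have hexp : HasDerivAt (fun s : ℝ => Real.exp (k * s)) (Real.exp (k * t) * k) t := by
      simpa using ((hasDerivAt_id t).const_mul k).exp
    exact hexp.mul (hderiv t x h3 h4 h1 h2)
  have hIent : ∀ t x, 0 ≤ t → t ≤ T → 0 ≤ ∫ y in (-h0)..h0, J (x - y) * u t y := by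
    intro t x h1 h2
    refine intervalIntegral.integral_nonneg (by linarith) (fun y hy => ?_)
    exact mul_nonneg (hJnn _) (part1 t y h1 h2 hy.1 hy.2)
  have hmono : ∀ x, -h0 ≤ x → x ≤ h0 →
      MonotoneOn (fun s => Real.exp (k * s) * u s x) (Set.Icc 0 T) := by
    intro x h1 h2
    apply monotoneOn_of_deriv_nonneg (convex_Icc 0 T)
    · exact ((Real.continuous_exp.comp (continuous_const.mul continuous_id)).continuousOn).mul
        (hcu_t x h1 h2)
    · intro t ht
      rw [interior_Icc] at ht
      exact ((hgderiv x h1 h2 t ht.1 ht.2.le).differentiableAt).differentiableWithinAt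
    · intro t ht
      rw [interior_Icc] at ht
      rw [(hgderiv x h1 h2 t ht.1 ht.2.le).deriv]
      have hut := hineq t x ht.1 ht.2.le h1 h2
      have hI := hIent t x ht.1.le ht.2.le
      have hu := part1 t x ht.1.le ht.2.le h1 h2
      obtain ⟨hc1, hc2⟩ := abs_le.mp (hCb t x ht.1.le ht.2.le h1 h2)
      have h5 : 0 ≤ k * u t x + ut t x := by
        have h6 : 0 ≤ (C + c t x) * u t x :=
          mul_nonneg (by linarith) hu
        have h7 : 0 ≤ d * ∫ y in (-h0)..h0, J (x - y) * u t y := mul_nonneg hd.le hI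
        rw [hk]
        nlinarith
      nlinarith [mul_nonneg (Real.exp_pos (k*t)).le h5]
  have hg0 : ∀ x, -h0 ≤ x → x ≤ h0 → ∀ t t', 0 ≤ t → t ≤ t' → t' ≤ T →
      Real.exp (k*t) * u t x ≤ Real.exp (k*t') * u t' x :=
    fun x h1 h2 t t' h3 h4 h5 => hmono x h1 h2 ⟨h3, le_trans h4 h5⟩ ⟨le_trans h3 h4, h5⟩ h4
  have hxspos : ∀ t, 0 ≤ t → t ≤ T → 0 < u t xs := by
    intro t h1 h2
    have h3 := hg0 xs hxs1 hxs2 0 t le_rfl h1 h2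
    have h4 : (0:ℝ) < Real.exp (k*t) * u t xs := lt_of_lt_of_le (by simpa using hus) h3
    by_contra hcon
    push_neg at hcon
    nlinarith [Real.exp_pos (k*t)]
  obtain ⟨ε, hε, hδ⟩ : ∃ ε > 0, ∀ z : ℝ, |z| < ε → 0 < J z := by
    have hmem := (isOpen_lt continuous_const hJc).mem_nhds (show (0:ℝ) ∈ {x | 0 < J x} from hJ0)
    rw [Metric.mem_nhds_iff] at hmem
    obtain ⟨ε, hε, hball⟩ := hmem
    exact ⟨ε, hε, fun z hz => hball (by simpa [Real.dist_eq] using hz)⟩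
  intro t0 x1 ht0pos ht0T hx11 hx12
  by_contra hcon
  push_neg at hcon
  have hx1z : u t0 x1 = 0 := le_antisymm hcon (part1 t0 x1 ht0pos.le ht0T hx11 hx12)
  set A : Set ℝ := {x | -h0 ≤ x ∧ x ≤ h0 ∧ ∀ t, 0 < t → t ≤ t0 → u t x = 0} with hA
  have hzero : ∀ x, -h0 ≤ x → x ≤ h0 → u t0 x = 0 → x ∈ A := by
    intro x h1 h2 h3
    refine ⟨h1, h2, fun t ht1 ht2 => ?_⟩
    have hle := hg0 x h1 h2 t t0 ht1.le ht2 ht0T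
    rw [h3, mul_zero] at hle
    have hnn : 0 ≤ u t x := part1 t x ht1.le (le_trans ht2 ht0T) h1 h2
    exact le_antisymm (nonpos_of_mul_nonpos_right hle (Real.exp_pos (k*t))) hnn
  have hspread : ∀ x' ∈ A, ∀ x, -h0 ≤ x → x ≤ h0 → |x - x'| ≤ ε/2 → x ∈ A := by
    intro x' hx' x h1 h2 hdist
    obtain ⟨hx'1, hx'2, hx'z⟩ := hx'
    have hopen : ∀ t, 0 < t → t < t0 → u t x = 0 := by
      intro t ht1 ht2
      have htT : t ≤ T := le_trans ht2.le ht0T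
      have hgd := hgderiv x' hx'1 hx'2 t ht1 htT
      have hzero_near : (fun s => Real.exp (k*s) * u s x') =ᶠ[𝓝 t] (fun _ => 0) := by
        filter_upwards [Ioo_mem_nhds ht1 ht2] with s hs
        rw [hx'z s hs.1 hs.2.le, mul_zero]
      have hd0 : HasDerivAt (fun _ : ℝ => (0:ℝ))
          (Real.exp (k*t)*k*u t x' + Real.exp (k*t)*ut t x') t :=
        hgd.congr_of_eventuallyEq hzero_near.symm
      have huniq := hd0.unique (hasDerivAt_const t (0:ℝ))
      have hux' : u t x' = 0 := hx'z t ht1 ht2.le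
      have hut0 : ut t x' = 0 := by
        rw [hux', mul_zero, zero_add] at huniq
        exact (mul_eq_zero.mp huniq).resolve_left (ne_of_gt (Real.exp_pos _))
      have hineq' := hineq t x' ht1 htT hx'1 hx'2
      rw [hux', hut0] at hineq'
      have hdI : d * (∫ y in (-h0)..h0, J (x' - y) * u t y) ≤ 0 := by linarith
      have hIz : (∫ y in (-h0)..h0, J (x' - y) * u t y) = 0 :=
        le_antisymm (nonpos_of_mul_nonpos_right hdI hd) (hIent t x' ht1.le htT)
      have hzy := eq_zero_of_intervalIntegral_eq_zero (by linarith : -h0 < h0)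
        (((hJc.comp (continuous_const.sub continuous_id)).continuousOn).mul
          (hcu_x t ht1.le htT))
        (fun y hy => mul_nonneg (hJnn _) (part1 t y ht1.le htT hy.1 hy.2)) hIz x ⟨h1, h2⟩
      have hJpos : 0 < J (x' - x) := by
        refine hδ _ ?_
        rw [abs_sub_comm]
        linarith [hdist]
      exact (mul_eq_zero.mp hzy).resolve_left (ne_of_gt hJpos)
    have hut0x : u t0 x = 0 := by
      have hcont := (hcu_t x h1 h2) t0 ⟨ht0pos.le, ht0T⟩
      have hne : (𝓝[Set.Ioo 0 t0] t0).NeBot := by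
        rw [← mem_closure_iff_nhdsWithin_neBot, closure_Ioo ht0pos.ne]
        exact ⟨ht0pos.le, le_rfl⟩
      have h1' : Tendsto (fun s => u s x) (𝓝[Set.Ioo 0 t0] t0) (𝓝 (u t0 x)) :=
        hcont.mono_left (nhdsWithin_mono _ (fun s hs => ⟨hs.1.le, le_trans hs.2.le ht0T⟩))
      have h2' : Tendsto (fun s => u s x) (𝓝[Set.Ioo 0 t0] t0) (𝓝 0) := by
        refine tendsto_const_nhds.congr' ?_
        filter_upwards [eventually_mem_nhdsWithin] with s hs
        exact (hopen s hs.1 hs.2).symm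
      exact tendsto_nhds_unique h1' h2'
    exact hzero x h1 h2 hut0x
  have hx1A : x1 ∈ A := hzero x1 hx11 hx12 hx1z
  have hind : ∀ n : ℕ, ∀ x, -h0 ≤ x → x ≤ h0 → |x - x1| ≤ n * (ε/2) → x ∈ A := by
    intro n
    induction n with
    | zero =>
      intro x h1 h2 h3
      have h4 : |x - x1| ≤ 0 := by
        have : ((0:ℕ):ℝ) * (ε/2) = 0 := by norm_num
        linarith [h3, this]
      rw [sub_eq_zero.mp (abs_nonpos_iff.mp h4)]
      exact hx1A
    | succ n ih =>
      intro x h1 h2 h3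
      rcases le_or_gt (|x - x1|) (n * (ε/2)) with h | h
      · exact ih x h1 h2 h
      · have hnnn : (0:ℝ) ≤ n * (ε/2) := by positivity
        push_cast at h3
        rcases le_total x1 x with hs | hs
        · have habs : |x - x1| = x - x1 := abs_of_nonneg (by linarith)
          rw [habs] at h h3
          obtain ⟨x', hx'⟩ : ∃ w : ℝ, w = x1 + (n:ℝ) * (ε/2) := ⟨_, rfl⟩
          have hx'A : x' ∈ A := by
            refine ih x' (by linarith) (by linarith) ?_
            rw [hx', show x1 + (n:ℝ) * (ε/2) - x1 = (n:ℝ)*(ε/2) by ring, abs_of_nonneg hnnn]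
          refine hspread x' hx'A x h1 h2 ?_
          rw [show x - x' = x - x1 - (n:ℝ)*(ε/2) by rw [hx']; ring,
            abs_of_nonneg (by linarith)]
          linarith
        · have habs : |x - x1| = x1 - x := by rw [abs_sub_comm]; exact abs_of_nonneg (by linarith)
          rw [habs] at h h3
          obtain ⟨x', hx'⟩ : ∃ w : ℝ, w = x1 - (n:ℝ) * (ε/2) := ⟨_, rfl⟩
          have hx'A : x' ∈ A := by
            refine ih x' (by linarith) (by linarith) ?_
            rw [hx', show x1 - (n:ℝ) * (ε/2) - x1 = -((n:ℝ)*(ε/2)) by ring, abs_neg,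
              abs_of_nonneg hnnn]
          refine hspread x' hx'A x h1 h2 ?_
          rw [show x - x' = -(x1 - x - (n:ℝ)*(ε/2)) by rw [hx']; ring, abs_neg,
            abs_of_nonneg (by linarith)]
          linarith
  obtain ⟨n, hn⟩ := exists_nat_ge (2*h0/(ε/2))
  have h2h0 : 2*h0 ≤ n * (ε/2) := by
    rw [div_le_iff₀ (by linarith)] at hn
    linarith
  have hxsA : xs ∈ A := hind n xs hxs1 hxs2
    (le_trans (abs_le.mpr ⟨by linarith, by linarith⟩) h2h0)
  have : u t0 xs = 0 := hxsA.2.2 t0 ht0pos le_rfl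
  linarith [hxspos t0 ht0pos.le ht0T]
end

section
/- (Continuity of the principal eigenvalue in the interval length) Let a0 > 0 be a constant. Then the function ℓ ↦ λ_p(ℓ) := λ_p(L_{(0,ℓ)} + a0) is continuous on (0,∞): for every ℓ0 > 0, λ_p(ℓ) → λ_p(ℓ0) as ℓ → ℓ0. -/
open MeasureTheory Set Filter Topology

/-- The principal eigenvalue `λ_p(L_{(l1,l2)} + a)` of the nonlocal operator
`φ ↦ d(∫_{l1}^{l2} J(x-y) φ(y) dy − φ(x)) + a φ(x)` on `[l1, l2]`, defined as the
infimum of the set of `λ` admitting a positive continuous test function `φ` with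
`(L + a)[φ] ≤ λ φ` on `[l1, l2]`. -/
noncomputable def lambdaP (d : ℝ) (J : ℝ → ℝ) (l1 l2 a : ℝ) : ℝ :=
  sInf {lam : ℝ | ∃ φ : ℝ → ℝ, ContinuousOn φ (Set.Icc l1 l2) ∧
    (∀ x ∈ Set.Icc l1 l2, 0 < φ x) ∧
    ∀ x ∈ Set.Icc l1 l2,
      d * ((∫ y in l1..l2, J (x - y) * φ y) - φ x) + a * φ x ≤ lam * φ x}

namespace LambdaPContAux


private lemma ii_sub {f : ℝ → ℝ} {p q a b : ℝ} (hf : ContinuousOn f (Icc p q))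
    (hpa : p ≤ a) (hab : a ≤ b) (hbq : b ≤ q) :
    IntervalIntegrable f volume a b :=
  (hf.mono (by rw [uIcc_of_le hab]; exact Icc_subset_Icc hpa hbq)).intervalIntegrable

private lemma integral_le_of_subinterval {f : ℝ → ℝ} {p q a b : ℝ}
    (hf : ContinuousOn f (Icc p q)) (hnn : ∀ x ∈ Icc p q, 0 ≤ f x)
    (hpa : p ≤ a) (hab : a ≤ b) (hbq : b ≤ q) :
    (∫ x in a..b, f x) ≤ ∫ x in p..q, f x := by
  have i1 := ii_sub hf le_rfl hpa (hab.trans hbq)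
  have i2 := ii_sub hf hpa hab hbq
  have i3 := ii_sub hf (hpa.trans hab) hbq le_rfl
  have e1 := intervalIntegral.integral_add_adjacent_intervals i1 i2
  have e2 := intervalIntegral.integral_add_adjacent_intervals (i1.trans i2) i3
  have n1 : 0 ≤ ∫ x in p..a, f x :=
    intervalIntegral.integral_nonneg hpa (fun u hu => hnn u ⟨hu.1, hu.2.trans (hab.trans hbq)⟩)
  have n3 : 0 ≤ ∫ x in b..q, f x :=
    intervalIntegral.integral_nonneg hbq (fun u hu => hnn u ⟨(hpa.trans hab).trans hu.1, hu.2⟩)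
  linarith

/-- The set of admissible `lam` for interval `[0, l]`. -/
private def testSet (d : ℝ) (J : ℝ → ℝ) (a0 l : ℝ) : Set ℝ :=
  {lam : ℝ | ∃ φ : ℝ → ℝ, ContinuousOn φ (Set.Icc 0 l) ∧
    (∀ x ∈ Set.Icc 0 l, 0 < φ x) ∧
    ∀ x ∈ Set.Icc 0 l,
      d * ((∫ y in (0:ℝ)..l, J (x - y) * φ y) - φ x) + a0 * φ x ≤ lam * φ x}

private lemma a0_mem {J : ℝ → ℝ} (hJnn : ∀ x, 0 ≤ J x) (hJint : Integrable J)
    (hJ1 : (∫ x, J x) = 1) {d : ℝ} (hd : 0 < d) (a0 : ℝ) {l : ℝ} (hl : 0 ≤ l) :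
    a0 ∈ testSet d J a0 l := by
  refine ⟨fun _ => 1, continuousOn_const, fun x _ => one_pos, fun x _ => ?_⟩
  show d * ((∫ y in (0:ℝ)..l, J (x - y) * 1) - 1) + a0 * 1 ≤ a0 * 1
  have key : (∫ y in (0:ℝ)..l, J (x - y) * 1) ≤ 1 := by
    simp only [mul_one]
    rw [intervalIntegral.integral_comp_sub_left J x]
    have hle : x - l ≤ x - 0 := by linarith
    rw [intervalIntegral.integral_of_le hle]
    calc (∫ y in Set.Ioc (x - l) (x - 0), J y) ≤ ∫ y, J y :=
          setIntegral_le_integral hJint (Filter.Eventually.of_forall hJnn)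
      _ = 1 := hJ1
  nlinarith

private lemma lower_bound {J : ℝ → ℝ} (hJnn : ∀ x, 0 ≤ J x) {d : ℝ} (hd : 0 < d)
    (a0 : ℝ) {l : ℝ} (hl : 0 ≤ l) {lam : ℝ} (hmem : lam ∈ testSet d J a0 l) :
    a0 - d ≤ lam := by
  obtain ⟨φ, hφc, hφp, hineq⟩ := hmem
  have h0 : (0:ℝ) ∈ Icc (0:ℝ) l := ⟨le_rfl, hl⟩
  have hI : 0 ≤ ∫ y in (0:ℝ)..l, J (0 - y) * φ y :=
    intervalIntegral.integral_nonneg hl (fun u hu => mul_nonneg (hJnn _) (hφp u hu).le)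
  have h1 := hineq 0 h0
  have h2 := hφp 0 h0
  nlinarith







/-- Pointwise Harnack bound: a point sees the integral of `φ` over any nearby block. -/
private lemma pointwise_harnack {J φ : ℝ → ℝ} {l r δ0 a b x : ℝ}
    (hJc : Continuous J) (hJnn : ∀ u, 0 ≤ J u)
    (hφc : ContinuousOn φ (Icc 0 l)) (hφp : ∀ y ∈ Icc 0 l, 0 < φ y)
    (hδ0 : 0 < δ0) (hJr : ∀ u, |u| ≤ r → δ0 ≤ J u)
    (hx : x ∈ Icc 0 l)
    (HK : (∫ y in (0:ℝ)..l, J (x - y) * φ y) ≤ φ x)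
    (h0a : 0 ≤ a) (hab : a ≤ b) (hbl : b ≤ l) (hra : x - r ≤ a) (hbr : b ≤ x + r) :
    δ0 * (∫ y in a..b, φ y) ≤ φ x := by
  have hf : ContinuousOn (fun y => J (x - y) * φ y) (Icc 0 l) :=
    ((hJc.comp (continuous_const.sub continuous_id)).continuousOn).mul hφc
  have hfnn : ∀ y ∈ Icc 0 l, 0 ≤ J (x - y) * φ y :=
    fun y hy => mul_nonneg (hJnn _) (hφp y hy).le
  have h1 : δ0 * (∫ y in a..b, φ y) = ∫ y in a..b, δ0 * φ y :=
    (intervalIntegral.integral_const_mul _ _).symm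
  have h2 : (∫ y in a..b, δ0 * φ y) ≤ ∫ y in a..b, J (x - y) * φ y := by
    refine intervalIntegral.integral_mono_on hab
      ((continuous_const.continuousOn.mul (hφc.mono (Icc_subset_Icc h0a hbl))).mono
        (by rw [uIcc_of_le hab])).intervalIntegrable
      (ii_sub hf h0a hab hbl) (fun y hy => ?_)
    have hy' : y ∈ Icc 0 l := ⟨h0a.trans hy.1, hy.2.trans hbl⟩
    refine mul_le_mul_of_nonneg_right (hJr _ (abs_le.2 ⟨?_, ?_⟩)) (hφp y hy').le
    · linarith [hy.2]
    · linarith [hy.1]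
  have h3 : (∫ y in a..b, J (x - y) * φ y) ≤ ∫ y in (0:ℝ)..l, J (x - y) * φ y :=
    integral_le_of_subinterval hf hfnn h0a hab hbl
  linarith

/-- Chaining lemma: propagate the Harnack bound over distance `(k+1) * (r/2)`. -/
private lemma chain {J φ : ℝ → ℝ} {l r δ0 : ℝ}
    (hJc : Continuous J) (hJnn : ∀ u, 0 ≤ J u)
    (hφc : ContinuousOn φ (Icc 0 l)) (hφp : ∀ y ∈ Icc 0 l, 0 < φ y)
    (hr : 0 < r) (hδ0 : 0 < δ0) (hJr : ∀ u, |u| ≤ r → δ0 ≤ J u)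
    (HK : ∀ x ∈ Icc 0 l, (∫ y in (0:ℝ)..l, J (x - y) * φ y) ≤ φ x) :
    ∀ k : ℕ, ∀ a b x : ℝ, 0 ≤ a → a ≤ b → b ≤ l → b - a ≤ r/2 →
      x ∈ Icc 0 l → a - (k+1)*(r/2) ≤ x → x ≤ b + (k+1)*(r/2) →
      δ0 * (min 1 (δ0*(r/2)))^k * (∫ y in a..b, φ y) ≤ φ x := by
  set h : ℝ := r/2 with hh
  have hhpos : 0 < h := by positivity
  set c : ℝ := min 1 (δ0 * h) with hc
  have hcpos : 0 < c := lt_min one_pos (by positivity)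
  have hc1 : c ≤ 1 := min_le_left _ _
  have hcδh : c ≤ δ0 * h := min_le_right _ _
  intro k
  induction k with
  | zero =>
    intro a b x h0a hab hbl hlen hx hax hxb
    simp only [pow_zero, mul_one]
    refine pointwise_harnack hJc hJnn hφc hφp hδ0 hJr hx (HK x hx) h0a hab hbl ?_ ?_
    · push_cast at hxb; linarith
    · push_cast at hax; linarith
  | succ k ih =>
    intro a b x h0a hab hbl hlen hx hax hxb
    push_cast at hax hxb
    have hint_nn : 0 ≤ ∫ y in a..b, φ y :=
      intervalIntegral.integral_nonneg hab
        (fun u hu => (hφp u ⟨h0a.trans hu.1, hu.2.trans hbl⟩).le)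
    have hmono : δ0 * c^(k+1) * (∫ y in a..b, φ y) ≤ δ0 * c^k * (∫ y in a..b, φ y) := by
      have : c^(k+1) ≤ c^k := pow_le_pow_of_le_one hcpos.le hc1 (Nat.le_succ k)
      have h2 : δ0 * c^(k+1) ≤ δ0 * c^k := by nlinarith
      exact mul_le_mul_of_nonneg_right h2 hint_nn
    rcases le_or_gt x (b + (k+1)*h) with hcase | hcase
    · rcases le_or_gt (a - (k+1)*h) x with hcase2 | hcase2
      · -- inner case: use ih directly
        have := ih a b x h0a hab hbl hlen hx (by push_cast; linarith) (by push_cast; linarith)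
        linarith
      · -- x < a - (k+1)*h : move one block left, to [a-h, a]
        have hk1 : (1:ℝ) ≤ (k:ℝ) + 1 := by
          have := (Nat.cast_nonneg k : (0:ℝ) ≤ k); linarith
        have hahx : x < a - h := by nlinarith
        have hah0 : 0 ≤ a - h := le_trans hx.1 (by linarith)
        -- pointwise bound on the new block
        have hblock : ∀ y ∈ Icc (a - h) a, δ0 * (∫ z in a..b, φ z) ≤ φ y := by
          intro y hy
          have hyl : y ∈ Icc 0 l := ⟨hah0.trans hy.1, hy.2.trans (hab.trans hbl)⟩
          exact pointwise_harnack hJc hJnn hφc hφp hδ0 hJr hyl (HK y hyl) h0a hab hbl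
            (by linarith [hy.2]) (by linarith [hy.1])
        have hbint : h * (δ0 * (∫ z in a..b, φ z)) ≤ ∫ y in (a-h)..a, φ y := by
          have hmon := intervalIntegral.integral_mono_on (by linarith : a - h ≤ a)
            (intervalIntegrable_const)
            (ii_sub hφc hah0 (by linarith : a - h ≤ a) (hab.trans hbl))
            (fun y hy => hblock y hy)
          have heq : (∫ _y in (a-h)..a, (δ0 * ∫ z in a..b, φ z)) = h * (δ0 * ∫ z in a..b, φ z) := by
            rw [intervalIntegral.integral_const, smul_eq_mul]; ring
          linarith
        have hstep := ih (a - h) a x hah0 (by linarith) (hab.trans hbl) (by linarith)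
          hx (by push_cast; linarith) (by push_cast; linarith)
        have hfinal : δ0 * c^k * (h * (δ0 * (∫ z in a..b, φ z))) ≤ φ x := by
          refine le_trans ?_ hstep
          exact mul_le_mul_of_nonneg_left hbint (by positivity)
        have hkey : δ0 * c^(k+1) * (∫ z in a..b, φ z) ≤ δ0 * c^k * (δ0 * h) * (∫ z in a..b, φ z) := by
          refine mul_le_mul_of_nonneg_right ?_ hint_nn
          have h1 : c^k * c ≤ c^k * (δ0*h) := mul_le_mul_of_nonneg_left hcδh (pow_nonneg hcpos.le k)
          calc δ0 * c^(k+1) = δ0 * (c^k * c) := by rw [pow_succ]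
            _ ≤ δ0 * (c^k * (δ0*h)) := mul_le_mul_of_nonneg_left h1 hδ0.le
            _ = δ0 * c^k * (δ0*h) := by ring
        have e : δ0 * c^k * (h * (δ0 * (∫ z in a..b, φ z))) = δ0 * c^k * (δ0 * h) * (∫ z in a..b, φ z) := by ring
        linarith
    · -- x > b + (k+1)*h : move one block right, to [b, b+h]
      have hk1 : (1:ℝ) ≤ (k:ℝ) + 1 := by
        have := (Nat.cast_nonneg k : (0:ℝ) ≤ k); linarith
      have hbhx : b + h < x := by nlinarith
      have hbhl : b + h ≤ l := le_trans (by linarith) hx.2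
      have hblock : ∀ y ∈ Icc b (b + h), δ0 * (∫ z in a..b, φ z) ≤ φ y := by
        intro y hy
        have hyl : y ∈ Icc 0 l := ⟨h0a.trans (hab.trans hy.1), hy.2.trans hbhl⟩
        exact pointwise_harnack hJc hJnn hφc hφp hδ0 hJr hyl (HK y hyl) h0a hab hbl
          (by linarith [hy.2]) (by linarith [hy.1])
      have hbint : h * (δ0 * (∫ z in a..b, φ z)) ≤ ∫ y in b..(b+h), φ y := by
        have hmon := intervalIntegral.integral_mono_on (by linarith : b ≤ b + h)
          (intervalIntegrable_const)
          (ii_sub hφc (h0a.trans hab) (by linarith : b ≤ b + h) hbhl)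
          (fun y hy => hblock y hy)
        have heq : (∫ _y in b..(b+h), (δ0 * ∫ z in a..b, φ z)) = h * (δ0 * ∫ z in a..b, φ z) := by
          rw [intervalIntegral.integral_const, smul_eq_mul]; ring
        linarith
      have hstep := ih b (b+h) x (h0a.trans hab) (by linarith) hbhl (by linarith)
        hx (by push_cast; linarith) (by push_cast; linarith)
      have hfinal : δ0 * c^k * (h * (δ0 * (∫ z in a..b, φ z))) ≤ φ x := by
        refine le_trans ?_ hstep
        exact mul_le_mul_of_nonneg_left hbint (by positivity)
      have hkey : δ0 * c^(k+1) * (∫ z in a..b, φ z) ≤ δ0 * c^k * (δ0 * h) * (∫ z in a..b, φ z) := by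
        refine mul_le_mul_of_nonneg_right ?_ hint_nn
        have h1 : c^k * c ≤ c^k * (δ0*h) := mul_le_mul_of_nonneg_left hcδh (pow_nonneg hcpos.le k)
        calc δ0 * c^(k+1) = δ0 * (c^k * c) := by rw [pow_succ]
          _ ≤ δ0 * (c^k * (δ0*h)) := mul_le_mul_of_nonneg_left h1 hδ0.le
          _ = δ0 * c^k * (δ0*h) := by ring
      have e : δ0 * c^k * (h * (δ0 * (∫ z in a..b, φ z))) = δ0 * c^k * (δ0 * h) * (∫ z in a..b, φ z) := by ring
      linarith

/-- Global Harnack-type bound: `∫_0^l φ ≤ C φ(x)` with `C` uniform in `l ≤ 2 l0`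
and in the test function. -/
private lemma harnack_global {J : ℝ → ℝ} {r δ0 l0 : ℝ}
    (hJc : Continuous J) (hJnn : ∀ u, 0 ≤ J u)
    (hr : 0 < r) (hδ0 : 0 < δ0) (hJr : ∀ u, |u| ≤ r → δ0 ≤ J u) (hl0 : 0 < l0) :
    ∃ C : ℝ, 0 < C ∧ ∀ l : ℝ, 0 ≤ l → l ≤ 2*l0 →
      ∀ φ : ℝ → ℝ, ContinuousOn φ (Icc 0 l) → (∀ y ∈ Icc 0 l, 0 < φ y) →
      (∀ x ∈ Icc 0 l, (∫ y in (0:ℝ)..l, J (x - y) * φ y) ≤ φ x) →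
      ∀ x ∈ Icc 0 l, (∫ y in (0:ℝ)..l, φ y) ≤ C * φ x := by
  set h : ℝ := r/2 with hh
  have hhpos : 0 < h := by positivity
  set c : ℝ := min 1 (δ0 * h) with hc
  have hcpos : 0 < c := lt_min one_pos (by positivity)
  set K : ℕ := ⌈2*l0/h⌉₊ + 1 with hK
  have hKh : 2*l0 ≤ (K:ℝ) * h := by
    have h1 : (2*l0/h) ≤ (⌈2*l0/h⌉₊ : ℝ) := Nat.le_ceil _
    have h2 : (K:ℝ) = (⌈2*l0/h⌉₊ : ℝ) + 1 := by push_cast [hK]; ring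
    rw [h2]
    calc 2*l0 = (2*l0/h) * h := by field_simp
      _ ≤ ((⌈2*l0/h⌉₊ : ℝ) + 1) * h := by nlinarith
  have hB : 0 < δ0 * c^K := by positivity
  refine ⟨(K : ℝ) * (δ0 * c^K)⁻¹, by positivity, ?_⟩
  intro l hl hl2 φ hφc hφp HK x hx
  have hchain := chain hJc hJnn hφc hφp hr hδ0 hJr HK K
  -- block bound
  have hblock : ∀ a b : ℝ, 0 ≤ a → a ≤ b → b ≤ l → b - a ≤ h →
      (∫ y in a..b, φ y) ≤ (δ0 * c^K)⁻¹ * φ x := by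
    intro a b h0a hab hbl hlen
    have h1 := hchain a b x h0a hab hbl hlen hx
      (by nlinarith [hx.1, (Nat.cast_nonneg K : (0:ℝ) ≤ K)])
      (by nlinarith [hx.2, (Nat.cast_nonneg K : (0:ℝ) ≤ K)])
    have h2 : (∫ y in a..b, φ y) ≤ φ x / (δ0 * c^K) := (le_div_iff₀' hB).mpr h1
    rw [div_eq_inv_mul] at h2
    exact h2
  -- covering induction
  have hcover : ∀ j : ℕ, (∫ y in (0:ℝ)..(min ((j:ℝ)*h) l), φ y) ≤ (j:ℝ) * ((δ0 * c^K)⁻¹ * φ x) := by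
    intro j
    induction j with
    | zero => simp [min_eq_left hl, intervalIntegral.integral_same]
    | succ j ih =>
      set a : ℝ := min ((j:ℝ)*h) l with ha
      set b : ℝ := min (((j:ℝ)+1)*h) l with hb
      have h0a : 0 ≤ a := le_min (by positivity) hl
      have hab : a ≤ b := min_le_min (by nlinarith [hhpos.le]) le_rfl
      have hbl : b ≤ l := min_le_right _ _
      have hlen : b - a ≤ h := by
        rcases le_total ((j:ℝ)*h) l with h1 | h1
        · have : a = (j:ℝ)*h := min_eq_left h1
          have hble : b ≤ ((j:ℝ)+1)*h := min_le_left _ _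
          rw [this] at *; nlinarith
        · have ha' : a = l := min_eq_right h1
          have hb' : b = l := min_eq_right (by nlinarith [hhpos.le])
          rw [ha', hb']; linarith
      have hsplit : (∫ y in (0:ℝ)..a, φ y) + (∫ y in a..b, φ y) = ∫ y in (0:ℝ)..b, φ y :=
        intervalIntegral.integral_add_adjacent_intervals
          (ii_sub hφc le_rfl h0a (hab.trans hbl)) (ii_sub hφc h0a hab hbl)
      have h2 := hblock a b h0a hab hbl hlen
      have : (∫ y in (0:ℝ)..b, φ y) ≤ ((j:ℝ)+1) * ((δ0 * c^K)⁻¹ * φ x) := by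
        push_cast at ih ⊢; nlinarith
      rw [hb] at this
      push_cast
      exact this
  have hfin := hcover K
  have hminK : min ((K:ℝ)*h) l = l := min_eq_right (by linarith)
  rw [hminK] at hfin
  calc (∫ y in (0:ℝ)..l, φ y) ≤ (K:ℝ) * ((δ0 * c^K)⁻¹ * φ x) := hfin
    _ = (K:ℝ) * (δ0 * c^K)⁻¹ * φ x := by ring



private lemma scaling {J : ℝ → ℝ} (hJc : Continuous J) (hJnn : ∀ u, 0 ≤ J u)
    {M : ℝ} (hM : ∀ u, J u ≤ M)
    {d a0 l0 r δ0 : ℝ} (hd : 0 < d) (hl0 : 0 < l0)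
    (hr : 0 < r) (hδ0 : 0 < δ0) (hJr : ∀ u, |u| ≤ r → δ0 ≤ J u)
    {ε : ℝ} (hε : 0 < ε) :
    ∃ δ : ℝ, 0 < δ ∧ ∀ l l' : ℝ, l0/2 ≤ l → l ≤ 2*l0 → l0/2 ≤ l' → l' ≤ 2*l0 →
      |l' - l| < δ → ∀ lam : ℝ, lam ≤ a0 → lam ∈ testSet d J a0 l →
      lam + ε ∈ testSet d J a0 l' := by
  obtain ⟨C, hC, hHar⟩ := harnack_global hJc hJnn hr hδ0 hJr hl0
  have hM0 : 0 < M := lt_of_lt_of_le hδ0 ((hJr 0 (by simp [hr.le])).trans (hM 0))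
  set q : ℝ := ε / (8 * d * C) with hq
  have hqpos : 0 < q := by positivity
  clear_value q
  have hUC : UniformContinuousOn J (Icc (-(2*l0)) (2*l0)) :=
    isCompact_Icc.uniformContinuousOn_of_continuous hJc.continuousOn
  rw [Metric.uniformContinuousOn_iff] at hUC
  obtain ⟨δu, hδu, hUCd⟩ := hUC q hqpos
  refine ⟨min (δu/4) (l0*q/(2*M)), lt_min (by positivity) (by positivity), ?_⟩
  intro l l' hl1 hl2 hl'1 hl'2 hδ lam hlam hmem
  obtain ⟨φ, hφc, hφp, hineq⟩ := hmem
  have hlpos : 0 < l := lt_of_lt_of_le (by positivity) hl1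
  have hl'pos : 0 < l' := lt_of_lt_of_le (by positivity) hl'1
  set ρ : ℝ := l'/l with hρ
  have hρpos : 0 < ρ := by positivity
  clear_value ρ
  have hρ4 : ρ ≤ 4 := by rw [hρ, div_le_iff₀ hlpos]; nlinarith
  set κ : ℝ := |ρ - 1| with hκ
  clear_value κ
  have hκ1 : κ = |l' - l| / l := by
    rw [hκ, hρ]
    have h : l'/l - 1 = (l' - l)/l := by field_simp
    rw [h, abs_div, abs_of_pos hlpos]
  -- bounds on κ
  have hκle : κ ≤ |l' - l| / (l0/2) := by
    rw [hκ1]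
    exact div_le_div_of_nonneg_left (abs_nonneg _) (by positivity) hl1
  have hκl0 : κ * l0 ≤ 2 * |l' - l| := by
    have h2 : |l' - l|/(l0/2) * l0 = 2*|l' - l| := by field_simp
    nlinarith [mul_le_mul_of_nonneg_right hκle hl0.le]
  have hκδu : κ * (2*l0) < δu := by
    have h1 : |l' - l| < δu/4 := lt_of_lt_of_le hδ (min_le_left _ _)
    nlinarith [hκl0]
  have hκM : κ * M ≤ q := by
    have h2' : |l' - l| < l0*q/(2*M) := lt_of_lt_of_le hδ (min_le_right _ _)
    have h3 : |l' - l| * (2*M) ≤ l0 * q := by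
      have h := mul_le_mul_of_nonneg_right h2'.le (by positivity : (0:ℝ) ≤ 2*M)
      rwa [div_mul_cancel₀ _ (by positivity : (0:ℝ) < 2*M).ne'] at h
    have h4 : κ*l0*M ≤ (2*|l' - l|)*M := mul_le_mul_of_nonneg_right hκl0 hM0.le
    have h5 : l0*(κ*M) ≤ l0*q := by nlinarith
    exact le_of_mul_le_mul_left h5 hl0
  have hκ0 : 0 ≤ κ := by rw [hκ]; exact abs_nonneg _
  -- the rescaled test function
  have hlρ : l * ρ = l' := by rw [hρ]; field_simp
  have hmaps : MapsTo (fun x => x * (l/l')) (Icc 0 l') (Icc 0 l) := by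
    intro x hx
    constructor
    · exact mul_nonneg hx.1 (by positivity)
    · calc x * (l/l') ≤ l' * (l/l') := mul_le_mul_of_nonneg_right hx.2 (by positivity)
        _ = l := by field_simp
  have hψc : ContinuousOn (fun x => φ (x * (l/l'))) (Icc 0 l') :=
    hφc.comp ((continuous_mul_right _).continuousOn) hmaps
  have hψp : ∀ x ∈ Icc 0 l', 0 < φ (x * (l/l')) := fun x hx => hφp _ (hmaps hx)
  refine ⟨fun x => φ (x * (l/l')), hψc, hψp, fun x hx => ?_⟩
  show d * ((∫ y in (0:ℝ)..l', J (x - y) * φ (y * (l/l'))) - φ (x * (l/l')))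
      + a0 * φ (x * (l/l')) ≤ (lam + ε) * φ (x * (l/l'))
  set x' : ℝ := x * (l/l') with hx'def
  clear_value x'
  have hx'mem : x' ∈ Icc 0 l := by rw [hx'def]; exact hmaps hx
  have hρx' : x = x' * ρ := by rw [hx'def, hρ]; field_simp
  -- substitution
  have hsub : (∫ y in (0:ℝ)..l', J (x - y) * φ (y * (l/l')))
      = ρ * ∫ z in (0:ℝ)..l, J (x - z*ρ) * φ z := by
    have hc0 : (l/l') ≠ 0 := (by positivity : (0:ℝ) < l/l').ne'
    have e : ∀ y : ℝ, J (x - y) * φ (y * (l/l')) = (fun z => J (x - z * ρ) * φ z) (y * (l/l')) := by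
      intro y
      have h : y * (l/l') * ρ = y := by rw [hρ]; field_simp
      simp only [h]
    calc (∫ y in (0:ℝ)..l', J (x - y) * φ (y * (l/l')))
        = ∫ y in (0:ℝ)..l', (fun z => J (x - z*ρ) * φ z) (y * (l/l')) :=
          intervalIntegral.integral_congr (fun y _ => e y)
      _ = (l/l')⁻¹ • ∫ z in (0*(l/l'))..(l'*(l/l')), J (x - z*ρ) * φ z :=
          intervalIntegral.integral_comp_mul_right (fun z => J (x - z*ρ) * φ z) hc0
      _ = ρ * ∫ z in (0:ℝ)..l, J (x - z*ρ) * φ z := by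
          rw [zero_mul, smul_eq_mul, show l'*(l/l') = l by field_simp, hρ, inv_div]
  rw [hsub]
  -- names for the integrals
  set A : ℝ := ∫ z in (0:ℝ)..l, J (x' - z) * φ z with hA
  set A' : ℝ := ∫ z in (0:ℝ)..l, J (x - z*ρ) * φ z with hA'
  set S : ℝ := ∫ z in (0:ℝ)..l, φ z with hS
  clear_value A A' S
  have hSnn : 0 ≤ S := by
    rw [hS]
    exact intervalIntegral.integral_nonneg hlpos.le (fun u hu => (hφp u hu).le)
  -- continuity of integrands
  have hcont1 : ContinuousOn (fun z => ρ * (J (x - z*ρ) * φ z)) (Icc 0 l) :=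
    continuous_const.continuousOn.mul
      (((hJc.comp (continuous_const.sub (continuous_mul_right ρ))).continuousOn).mul hφc)
  have hcont2 : ContinuousOn (fun z => J (x' - z) * φ z) (Icc 0 l) :=
    ((hJc.comp (continuous_const.sub continuous_id)).continuousOn).mul hφc
  have hcont3 : ContinuousOn (fun z => (4*q + κ*M) * φ z) (Icc 0 l) :=
    continuous_const.continuousOn.mul hφc
  -- main integral comparison
  have hAbound : ρ * A' ≤ A + (4*q + κ*M) * S := by
    have h1 : ρ * A' = ∫ z in (0:ℝ)..l, ρ * (J (x - z*ρ) * φ z) := by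
      rw [hA']
      exact (intervalIntegral.integral_const_mul _ _).symm
    have h2 : A + (4*q + κ*M) * S
        = ∫ z in (0:ℝ)..l, (J (x' - z) * φ z + (4*q + κ*M) * φ z) := by
      rw [hA, hS, intervalIntegral.integral_add
        (ii_sub hcont2 le_rfl hlpos.le le_rfl) (ii_sub hcont3 le_rfl hlpos.le le_rfl),
        intervalIntegral.integral_const_mul]
    rw [h1, h2]
    refine intervalIntegral.integral_mono_on hlpos.le
      (ii_sub hcont1 le_rfl hlpos.le le_rfl)
      (ii_sub (hcont2.add hcont3) le_rfl hlpos.le le_rfl) (fun z hz => ?_)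
    have hzρ1 : 0 ≤ z*ρ := mul_nonneg hz.1 hρpos.le
    have hzρ2 : z*ρ ≤ l' := by
      have h := mul_le_mul_of_nonneg_right hz.2 hρpos.le
      rw [hlρ] at h; exact h
    have hu : x - z*ρ ∈ Icc (-(2*l0)) (2*l0) :=
      ⟨by linarith [hx.1, hx.2], by linarith [hx.1, hx.2]⟩
    have hv : x' - z ∈ Icc (-(2*l0)) (2*l0) :=
      ⟨by linarith [hx'mem.1, hx'mem.2, hz.1, hz.2], by linarith [hx'mem.1, hx'mem.2, hz.1, hz.2]⟩
    have hdist : dist (x - z*ρ) (x' - z) < δu := by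
      rw [Real.dist_eq]
      have hid : x - z*ρ - (x' - z) = (ρ - 1)*(x' - z) := by rw [hρx']; ring
      rw [hid, abs_mul, ← hκ]
      have hxz : |x' - z| ≤ 2*l0 :=
        abs_le.2 ⟨by linarith [hx'mem.1, hz.2], by linarith [hx'mem.2, hz.1]⟩
      calc κ * |x' - z| ≤ κ * (2*l0) :=
            mul_le_mul_of_nonneg_left hxz hκ0
        _ < δu := hκδu
    have hJuv := hUCd _ hu _ hv hdist
    rw [Real.dist_eq] at hJuv
    have hJu_v : J (x - z*ρ) - J (x' - z) ≤ q := (abs_lt.1 hJuv).2.le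
    have hρ1κ : ρ - 1 ≤ κ := by rw [hκ]; exact le_abs_self _
    have hφz := (hφp z hz).le
    have hJv_nn := hJnn (x' - z)
    have hJv_M := hM (x' - z)
    have hmain : ρ * J (x - z*ρ) ≤ J (x' - z) + (4*q + κ*M) := by
      have t1 : ρ * (J (x - z*ρ) - J (x' - z)) ≤ ρ * q :=
        mul_le_mul_of_nonneg_left hJu_v hρpos.le
      have t2 : ρ * q ≤ 4 * q := mul_le_mul_of_nonneg_right hρ4 hqpos.le
      have t3 : (ρ - 1) * J (x' - z) ≤ κ * J (x' - z) :=
        mul_le_mul_of_nonneg_right hρ1κ hJv_nn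
      have t4 : κ * J (x' - z) ≤ κ * M := mul_le_mul_of_nonneg_left hJv_M hκ0
      linarith [t1, t2, t3, t4]
    calc ρ * (J (x - z*ρ) * φ z) = (ρ * J (x - z*ρ)) * φ z := by ring
      _ ≤ (J (x' - z) + (4*q + κ*M)) * φ z := mul_le_mul_of_nonneg_right hmain hφz
      _ = J (x' - z) * φ z + (4*q + κ*M) * φ z := by ring
  -- Harnack for φ
  have hHK : ∀ w ∈ Icc 0 l, (∫ y in (0:ℝ)..l, J (w - y) * φ y) ≤ φ w := by
    intro w hw
    have h1 := hineq w hw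
    have h2 : 0 ≤ (a0 - lam) * φ w := mul_nonneg (by linarith) (hφp w hw).le
    have h3 : d * (∫ y in (0:ℝ)..l, J (w - y) * φ y) ≤ d * φ w := by linarith [h1, h2]
    exact le_of_mul_le_mul_left h3 hd
  have hS_le : S ≤ C * φ x' := by
    rw [hS]
    exact hHar l hlpos.le hl2 φ hφc hφp hHK x' hx'mem
  have hφx' : 0 < φ x' := hφp x' hx'mem
  -- coefficient arithmetic
  have hqC : d * C * q = ε/8 := by
    rw [hq]; field_simp
  have hcoef : d * ((4*q + κ*M) * (C * φ x')) ≤ ε * φ x' := by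
    have h1 : 4*q + κ*M ≤ 5*q := by linarith
    have h2 : d * ((4*q + κ*M) * (C * φ x')) ≤ d * (5*q * (C * φ x')) :=
      mul_le_mul_of_nonneg_left
        (mul_le_mul_of_nonneg_right h1 (mul_nonneg hC.le hφx'.le)) hd.le
    have h3 : d * (5*q * (C * φ x')) = 5*(d*C*q)*φ x' := by ring
    rw [h3, hqC] at h2
    linarith [mul_pos hε hφx']
  -- error bound
  have hEbound : d * (ρ*A' - A) ≤ ε * φ x' := by
    have h1 : d * (ρ*A' - A) ≤ d * ((4*q + κ*M) * S) :=
      mul_le_mul_of_nonneg_left (by linarith) hd.le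
    have h2 : d * ((4*q + κ*M) * S) ≤ d * ((4*q + κ*M) * (C * φ x')) :=
      mul_le_mul_of_nonneg_left
        (mul_le_mul_of_nonneg_left hS_le
          (by linarith [mul_nonneg hκ0 hM0.le] : (0:ℝ) ≤ 4*q + κ*M)) hd.le
    linarith
  have htest : d * (A - φ x') + a0 * φ x' ≤ lam * φ x' := by
    have h := hineq x' hx'mem
    rw [hA]; exact h
  linarith [htest, hEbound]



private lemma lambdaP_eq (d : ℝ) (J : ℝ → ℝ) (a0 l : ℝ) :
    lambdaP d J 0 l a0 = sInf (testSet d J a0 l) := rfl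


end LambdaPContAux

open LambdaPContAux in
/-- **Continuity of the principal eigenvalue in the interval length**
(Proposition 3.4(i) of Cao–Du–Li–Li). -/
theorem lambdaP_continuous_in_length
    (J : ℝ → ℝ) (hJc : Continuous J) (hJnn : ∀ x, 0 ≤ J x)
    (hJeven : ∀ x, J (-x) = J x) (hJbdd : BddAbove (Set.range J))
    (hJ0 : 0 < J 0) (hJint : Integrable J) (hJ1 : (∫ x, J x) = 1)
    (d : ℝ) (hd : 0 < d) (a0 : ℝ) (ha0 : 0 < a0) :
    ∀ l0 : ℝ, 0 < l0 →
      Filter.Tendsto (fun l => lambdaP d J 0 l a0) (nhdsWithin l0 (Set.Ioi 0))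
        (nhds (lambdaP d J 0 l0 a0)) := by
  intro l0 hl0
  -- upper bound for J
  obtain ⟨M, hMub⟩ := hJbdd
  have hM : ∀ u, J u ≤ M := fun u => hMub ⟨u, rfl⟩
  -- a neighborhood of 0 where J is positive
  obtain ⟨rr, hrr, hJball⟩ := Metric.continuousAt_iff.mp hJc.continuousAt (J 0 / 2) (half_pos hJ0)
  have hJr : ∀ u, |u| ≤ rr/2 → J 0 / 2 ≤ J u := by
    intro u hu
    have h1 : dist u 0 < rr := by
      rw [Real.dist_eq, sub_zero]; linarith
    have h2 := hJball h1
    rw [Real.dist_eq] at h2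
    have := (abs_lt.1 h2).1
    linarith
  have hr2 : 0 < rr/2 := by positivity
  have hδ0 : 0 < J 0 / 2 := by positivity
  rw [Metric.tendsto_nhdsWithin_nhds]
  intro ε hε
  obtain ⟨δs, hδs, hscal⟩ := scaling hJc hJnn hM hd hl0 hr2 hδ0 hJr
    (ε := ε/4) (by positivity)
  refine ⟨min δs (l0/2), lt_min hδs (by positivity), ?_⟩
  intro l hlIoi hdist
  rw [Real.dist_eq] at hdist
  have hd1 : |l - l0| < δs := lt_of_lt_of_le hdist (min_le_left _ _)
  have hd2 : |l - l0| < l0/2 := lt_of_lt_of_le hdist (min_le_right _ _)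
  have habs := abs_lt.1 hd2
  have hlA : l0/2 ≤ l := by linarith
  have hlB : l ≤ 2*l0 := by linarith
  have hl0A : l0/2 ≤ l0 := by linarith
  have hl0B : l0 ≤ 2*l0 := by linarith
  -- one-sided estimate
  have key : ∀ l1 l2 : ℝ, l0/2 ≤ l1 → l1 ≤ 2*l0 → l0/2 ≤ l2 → l2 ≤ 2*l0 →
      |l2 - l1| < δs → sInf (testSet d J a0 l2) ≤ sInf (testSet d J a0 l1) + ε/2 := by
    intro l1 l2 h11 h12 h21 h22 hdd
    have hl1nn : (0:ℝ) ≤ l1 := le_trans (by positivity) h11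
    have hl2nn : (0:ℝ) ≤ l2 := le_trans (by positivity) h21
    have hne1 : (testSet d J a0 l1).Nonempty := ⟨a0, a0_mem hJnn hJint hJ1 hd a0 hl1nn⟩
    have hbdd2 : BddBelow (testSet d J a0 l2) :=
      ⟨a0 - d, fun lam hlam => lower_bound hJnn hd a0 hl2nn hlam⟩
    rcases le_or_gt a0 (sInf (testSet d J a0 l1) + ε/2) with hc | hc
    · exact le_trans (csInf_le hbdd2 (a0_mem hJnn hJint hJ1 hd a0 hl2nn)) hc
    · have hlt : sInf (testSet d J a0 l1) < sInf (testSet d J a0 l1) + ε/4 := by linarith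
      obtain ⟨lam, hlam_mem, hlam_lt⟩ := exists_lt_of_csInf_lt hne1 hlt
      have hlam_le : lam ≤ a0 := by linarith
      have hmem2 := hscal l1 l2 h11 h12 h21 h22 hdd lam hlam_le hlam_mem
      have := csInf_le hbdd2 hmem2
      linarith
  have hd1' : |l0 - l| < δs := by rw [abs_sub_comm]; exact hd1
  have k1 := key l0 l hl0A hl0B hlA hlB hd1
  have k2 := key l l0 hlA hlB hl0A hl0B hd1'
  rw [Real.dist_eq, lambdaP_eq, lambdaP_eq, abs_lt]
  constructor <;> linarith
end

section
/- (Limit of the principal eigenvalue on long intervals) Let a0 > 0 be a constant. Then λ_p(ℓ) := λ_p(L_{(0,ℓ)} + a0) satisfies λ_p(ℓ) ≤ a0 for all ℓ > 0, and λ_p(ℓ) → a0 as ℓ → +∞. -/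
open MeasureTheory Set Filter Topology

section LambdaPAux



variable {J : ℝ → ℝ} {d a0 l : ℝ}

/-- The admissible set in the definition of the principal eigenvalue. -/
def lamSet (d : ℝ) (J : ℝ → ℝ) (l a0 : ℝ) : Set ℝ :=
  {lam : ℝ | ∃ φ : ℝ → ℝ, ContinuousOn φ (Set.Icc 0 l) ∧
    (∀ x ∈ Set.Icc 0 l, 0 < φ x) ∧
    ∀ x ∈ Set.Icc 0 l,
      d * ((∫ y in (0:ℝ)..l, J (x - y) * φ y) - φ x) + a0 * φ x ≤ lam * φ x}

lemma intJ_le_one (hJnn : ∀ x, 0 ≤ J x) (hJint : Integrable J) (hJ1 : (∫ x, J x) = 1)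
    {a b : ℝ} (hab : a ≤ b) : (∫ u in a..b, J u) ≤ 1 := by
  rw [intervalIntegral.integral_of_le hab, ← hJ1]
  exact setIntegral_le_integral hJint (Eventually.of_forall hJnn)

lemma a0_mem_lamSet (hJnn : ∀ x, 0 ≤ J x) (hJint : Integrable J) (hJ1 : (∫ x, J x) = 1)
    (hd : 0 < d) (hl : 0 ≤ l) : a0 ∈ lamSet d J l a0 := by
  refine ⟨fun _ => 1, continuousOn_const, fun x _ => one_pos, fun x hx => ?_⟩
  have h1 : (∫ y in (0:ℝ)..l, J (x - y) * 1) = ∫ u in (x - l)..x, J u := by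
    simp only [mul_one]
    simpa using intervalIntegral.integral_comp_sub_left J x (a := 0) (b := l)
  have h2 : (∫ u in (x - l)..x, J u) ≤ 1 := intJ_le_one hJnn hJint hJ1 (by linarith)
  have h3 : (∫ y in (0:ℝ)..l, J (x - y) * 1) ≤ 1 := h1 ▸ h2
  show d * ((∫ y in (0:ℝ)..l, J (x - y) * 1) - 1) + a0 * 1 ≤ a0 * 1
  nlinarith

lemma lamSet_lower_simple (hJnn : ∀ x, 0 ≤ J x) (hd : 0 < d) (hl : 0 ≤ l)
    {lam : ℝ} (hlam : lam ∈ lamSet d J l a0) : a0 - d ≤ lam := by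
  obtain ⟨φ, hφc, hφpos, hφineq⟩ := hlam
  have h0 : (0:ℝ) ∈ Set.Icc (0:ℝ) l := ⟨le_refl _, hl⟩
  have hInn : 0 ≤ ∫ y in (0:ℝ)..l, J (0 - y) * φ y :=
    intervalIntegral.integral_nonneg hl fun u hu => mul_nonneg (hJnn _) (hφpos u hu).le
  have := hφineq 0 h0
  nlinarith [hφpos 0 h0]



lemma lamSet_lower (J : ℝ → ℝ) (hJc : Continuous J) (hJnn : ∀ x, 0 ≤ J x)
    (hJeven : ∀ x, J (-x) = J x) {d a0 l : ℝ} (hd : 0 < d) (hl : 0 < l)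
    {lam : ℝ} (hlam : lam ∈ lamSet d J l a0) :
    a0 - d + (d / l) * (∫ x in Ioc (0:ℝ) l, ∫ y in Ioc (0:ℝ) l, J (x - y)) ≤ lam := by
  obtain ⟨φ, hφc, hφpos, hφineq⟩ := hlam
  set g : ℝ → ℝ := fun x => min (max x 0) l with hg
  have hgmem : ∀ x, g x ∈ Icc (0:ℝ) l := fun x =>
    ⟨le_min (le_max_right x 0) hl.le, min_le_right _ _⟩
  have hgc : Continuous g := (continuous_id.max continuous_const).min continuous_const
  set ψ : ℝ → ℝ := fun x => φ (g x) with hψ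
  have hψc : Continuous ψ := hφc.comp_continuous hgc hgmem
  have hψpos : ∀ x, 0 < ψ x := fun x => hφpos _ (hgmem x)
  have hψeq : ∀ x ∈ Icc (0:ℝ) l, ψ x = φ x := by
    intro x hx
    simp only [hψ, hg, max_eq_left hx.1, min_eq_left hx.2]
  set c := lam - a0 + d with hc
  set μ := (volume : Measure ℝ).restrict (Ioc 0 l) with hμ
  have key : ∀ x ∈ Icc (0:ℝ) l, d * (∫ y, J (x - y) * ψ y ∂μ) ≤ c * ψ x := by
    intro x hx
    have h1 := hφineq x hx
    have h2 : (∫ y in (0:ℝ)..l, J (x - y) * φ y) = ∫ y, J (x - y) * ψ y ∂μ := by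
      rw [intervalIntegral.integral_of_le hl.le]
      refine setIntegral_congr_fun measurableSet_Ioc fun y hy => ?_
      rw [hψeq y (Ioc_subset_Icc_self hy)]
    rw [h2, ← hψeq x hx] at h1
    have hce : c * ψ x = lam * ψ x - a0 * ψ x + d * ψ x := by rw [hc]; ring
    linarith
  have hcnn : 0 ≤ c := by
    have h0 : (0:ℝ) ∈ Icc (0:ℝ) l := ⟨le_refl _, hl.le⟩
    have hInn : 0 ≤ ∫ y, J (0 - y) * ψ y ∂μ :=
      integral_nonneg fun y => mul_nonneg (hJnn _) (hψpos y).le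
    nlinarith [key 0 h0, hψpos 0]
  set f : ℝ × ℝ → ℝ := fun p => J (p.1 - p.2) * ψ p.2 * (ψ p.1)⁻¹ with hf
  have hfc : Continuous f :=
    ((hJc.comp (continuous_fst.sub continuous_snd)).mul (hψc.comp continuous_snd)).mul
      ((hψc.comp continuous_fst).inv₀ fun p => (hψpos p.1).ne')
  have hprod : μ.prod μ = (volume : Measure (ℝ × ℝ)).restrict (Ioc 0 l ×ˢ Ioc 0 l) := by
    rw [Measure.volume_eq_prod, Measure.prod_restrict]
  have hsub : (Ioc (0:ℝ) l ×ˢ Ioc (0:ℝ) l) ⊆ Icc (0:ℝ) l ×ˢ Icc (0:ℝ) l :=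
    Set.prod_mono Ioc_subset_Icc_self Ioc_subset_Icc_self
  have hfint : Integrable f (μ.prod μ) := by
    rw [hprod]
    exact (hfc.continuousOn.integrableOn_compact (isCompact_Icc.prod isCompact_Icc)).mono_set hsub
  have hfswap : Integrable (fun p : ℝ × ℝ => f (p.2, p.1)) (μ.prod μ) := by
    have := hfint.swap
    exact this
  have hJint2 : Integrable (fun p : ℝ × ℝ => J (p.1 - p.2)) (μ.prod μ) := by
    rw [hprod]
    exact (((hJc.comp (continuous_fst.sub continuous_snd)).continuousOn).integrableOn_compact
      (isCompact_Icc.prod isCompact_Icc)).mono_set hsub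
  -- inner integrabilities for fixed x
  have hinner1 : ∀ x : ℝ, Integrable (fun y => J (x - y)) μ := fun x =>
    (hJc.comp (continuous_const.sub continuous_id)).integrableOn_Ioc
  have hinner2 : ∀ x : ℝ, Integrable (fun y => (f (x, y) + f (y, x)) / 2) μ := by
    intro x
    have : Continuous fun y => (f (x, y) + f (y, x)) / 2 :=
      (((hfc.comp (Continuous.prodMk_right x)).add
        (hfc.comp (continuous_id.prodMk continuous_const)))).div_const 2
    exact this.integrableOn_Ioc
  set Q := ∫ x, ∫ y, f (x, y) ∂μ ∂μ with hQ
  have hQ' : (∫ x, ∫ y, f (y, x) ∂μ ∂μ) = Q := by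
    have h := integral_integral_swap (f := fun x y => f (y, x)) (μ := μ) (ν := μ) hfswap
    exact h
  have hIle : (∫ x, ∫ y, J (x - y) ∂μ ∂μ) ≤ Q := by
    have step1 : (∫ x, ∫ y, J (x - y) ∂μ ∂μ) ≤ ∫ x, ∫ y, (f (x, y) + f (y, x)) / 2 ∂μ ∂μ := by
      refine integral_mono hJint2.integral_prod_left
        ((hfint.add hfswap).div_const 2).integral_prod_left fun x => ?_
      refine integral_mono (hinner1 x) (hinner2 x) fun y => ?_
      -- pointwise AM-GM
      have hx := hψpos x
      have hy := hψpos y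
      have hJs : J (y - x) = J (x - y) := by
        rw [← hJeven (x - y)]; ring_nf
      have key2 : 2 ≤ ψ y * (ψ x)⁻¹ + ψ x * (ψ y)⁻¹ := by
        rw [← sub_nonneg]
        have e : ψ y * (ψ x)⁻¹ + ψ x * (ψ y)⁻¹ - 2 = (ψ x - ψ y) ^ 2 / (ψ x * ψ y) := by
          field_simp; ring
        rw [e]; positivity
      have hJxy := hJnn (x - y)
      simp only [hf, hJs]
      calc J (x - y) = J (x - y) * 2 / 2 := by ring
        _ ≤ J (x - y) * (ψ y * (ψ x)⁻¹ + ψ x * (ψ y)⁻¹) / 2 := by gcongr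
        _ = (J (x - y) * ψ y * (ψ x)⁻¹ + J (x - y) * ψ x * (ψ y)⁻¹) / 2 := by ring
    have step2 : (∫ x, ∫ y, (f (x, y) + f (y, x)) / 2 ∂μ ∂μ) = Q := by
      have e1 : ∀ x : ℝ, (∫ y, (f (x, y) + f (y, x)) / 2 ∂μ)
          = ((∫ y, f (x, y) ∂μ) + ∫ y, f (y, x) ∂μ) / 2 := by
        intro x
        have i1 : Integrable (fun y => f (x, y)) μ :=
          (hfc.comp (Continuous.prodMk_right x)).integrableOn_Ioc
        have i2 : Integrable (fun y => f (y, x)) μ :=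
          (hfc.comp (continuous_id.prodMk continuous_const)).integrableOn_Ioc
        rw [integral_div, integral_add i1 i2]
      simp only [e1]
      rw [integral_div, integral_add hfint.integral_prod_left hfswap.integral_prod_left, hQ']
      ring
    linarith [step1, step2.le, step2.ge]
  have hQle : Q ≤ (c / d) * l := by
    have hmarg : Integrable (fun x => ∫ y, f (x, y) ∂μ) μ := hfint.integral_prod_left
    have hbound : ∀ x ∈ Ioc (0:ℝ) l, (∫ y, f (x, y) ∂μ) ≤ c / d := by
      intro x hx
      have hx' : x ∈ Icc (0:ℝ) l := Ioc_subset_Icc_self hx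
      have h1 : (∫ y, f (x, y) ∂μ) = (∫ y, J (x - y) * ψ y ∂μ) * (ψ x)⁻¹ := by
        simp only [hf]
        rw [integral_mul_const]
      rw [h1]
      have h2 := key x hx'
      have hψx := hψpos x
      have h3 : (∫ y, J (x - y) * ψ y ∂μ) ≤ (c / d) * ψ x := by
        rw [div_mul_eq_mul_div, le_div_iff₀ hd, mul_comm]
        linarith
      calc (∫ y, J (x - y) * ψ y ∂μ) * (ψ x)⁻¹ ≤ ((c / d) * ψ x) * (ψ x)⁻¹ := by
            exact mul_le_mul_of_nonneg_right h3 (by positivity)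
        _ = c / d := by field_simp
    have hmarg' : IntegrableOn (fun x => ∫ y, f (x, y) ∂μ) (Ioc 0 l) volume := hmarg
    have hconst' : IntegrableOn (fun _ : ℝ => c / d) (Ioc 0 l) volume :=
      integrableOn_const (by simp [Real.volume_Ioc, ENNReal.ofReal_lt_top])
    have h := setIntegral_mono_on hmarg' hconst' measurableSet_Ioc hbound
    have h2 : (∫ _x in Ioc (0:ℝ) l, (c / d)) = l * (c / d) := by
      rw [setIntegral_const]
      simp [Real.volume_Ioc, ENNReal.toReal_ofReal hl.le, hl.le]
    have h4 : Q ≤ l * (c / d) := h.trans (le_of_eq h2)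
    linarith
  have hfinal : (d / l) * (∫ x, ∫ y, J (x - y) ∂μ ∂μ) ≤ c := by
    have h1 : d * (∫ x, ∫ y, J (x - y) ∂μ ∂μ) ≤ c * l := by
      calc d * (∫ x, ∫ y, J (x - y) ∂μ ∂μ) ≤ d * Q := by
            exact mul_le_mul_of_nonneg_left hIle hd.le
        _ ≤ d * ((c / d) * l) := mul_le_mul_of_nonneg_left hQle hd.le
        _ = c * l := by field_simp
    rw [div_mul_eq_mul_div, div_le_iff₀ hl]
    nlinarith [h1]
  have : (∫ x in Ioc (0:ℝ) l, ∫ y in Ioc (0:ℝ) l, J (x - y)) = ∫ x, ∫ y, J (x - y) ∂μ ∂μ := rfl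
  rw [this]
  linarith [hfinal]


lemma I_lower (J : ℝ → ℝ) (hJc : Continuous J) (hJnn : ∀ x, 0 ≤ J x)
    (hJint : Integrable J) {l m : ℝ} (hm : 0 < m) (hml : 2 * m ≤ l) :
    (l - 2 * m) * (∫ u in (-m)..m, J u) ≤ ∫ x in Ioc (0:ℝ) l, ∫ y in Ioc (0:ℝ) l, J (x - y) := by
  have hl : 0 < l := by linarith
  set μ := (volume : Measure ℝ).restrict (Ioc 0 l) with hμ
  have hprod : μ.prod μ = (volume : Measure (ℝ × ℝ)).restrict (Ioc 0 l ×ˢ Ioc 0 l) := by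
    rw [Measure.volume_eq_prod, Measure.prod_restrict]
  have hsub : (Ioc (0:ℝ) l ×ˢ Ioc (0:ℝ) l) ⊆ Icc (0:ℝ) l ×ˢ Icc (0:ℝ) l :=
    Set.prod_mono Ioc_subset_Icc_self Ioc_subset_Icc_self
  have hJint2 : Integrable (fun p : ℝ × ℝ => J (p.1 - p.2)) (μ.prod μ) := by
    rw [hprod]
    exact (((hJc.comp (continuous_fst.sub continuous_snd)).continuousOn).integrableOn_compact
      (isCompact_Icc.prod isCompact_Icc)).mono_set hsub
  have hmarg : Integrable (fun x => ∫ y, J (x - y) ∂μ) μ := hJint2.integral_prod_left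
  have hnn : ∀ x : ℝ, 0 ≤ ∫ y, J (x - y) ∂μ := fun x =>
    integral_nonneg fun y => hJnn _
  have hinner_eq : ∀ x : ℝ, (∫ y, J (x - y) ∂μ) = ∫ u in (x - l)..x, J u := by
    intro x
    have h1 : (∫ y in (0:ℝ)..l, J (x - y)) = ∫ y, J (x - y) ∂μ :=
      intervalIntegral.integral_of_le hl.le
    rw [← h1]
    simpa using intervalIntegral.integral_comp_sub_left J x (a := 0) (b := l)
  set cm := ∫ u in (-m)..m, J u with hcm
  have hsubset : Ioc m (l - m) ⊆ Ioc (0:ℝ) l := Ioc_subset_Ioc hm.le (by linarith)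
  have step1 : (∫ x in Ioc m (l - m), (∫ y, J (x - y) ∂μ)) ≤ ∫ x, (∫ y, J (x - y) ∂μ) ∂μ := by
    have hmarg' : IntegrableOn (fun x => ∫ y, J (x - y) ∂μ) (Ioc 0 l) volume := hmarg
    exact setIntegral_mono_set hmarg' (Eventually.of_forall hnn) hsubset.eventuallyLE
  have step2 : (l - 2 * m) * cm ≤ ∫ x in Ioc m (l - m), (∫ y, J (x - y) ∂μ) := by
    have hconst : IntegrableOn (fun _ : ℝ => cm) (Ioc m (l - m)) volume :=
      integrableOn_const (by simp [Real.volume_Ioc, ENNReal.ofReal_lt_top])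
    have hmarg'' : IntegrableOn (fun x => ∫ y, J (x - y) ∂μ) (Ioc m (l - m)) volume :=
      IntegrableOn.mono_set (hmarg : IntegrableOn (fun x => ∫ y, J (x - y) ∂μ) (Ioc 0 l) volume)
        hsubset
    have hle : ∀ x ∈ Ioc m (l - m), cm ≤ ∫ y, J (x - y) ∂μ := by
      intro x hx
      rw [hinner_eq x]
      exact intervalIntegral.integral_mono_interval (by linarith [hx.2] : x - l ≤ -m)
        (by linarith : -m ≤ m) (le_of_lt hx.1)
        (Eventually.of_forall fun u => hJnn u) hJint.intervalIntegrable
    have h := setIntegral_mono_on hconst hmarg'' measurableSet_Ioc hle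
    have h2 : (∫ _x in Ioc m (l - m), cm) = (l - 2 * m) * cm := by
      rw [setIntegral_const]
      simp only [measureReal_def, Real.volume_Ioc, smul_eq_mul]
      rw [ENNReal.toReal_ofReal (by linarith)]
      ring_nf
    linarith [h, h2.le, h2.ge]
  exact le_trans step2 step1

end LambdaPAux

/-- **Limit of the principal eigenvalue on long intervals**
(Proposition 3.4(ii) of Cao–Du–Li–Li). -/
theorem lambdaP_limit_long_intervals
    (J : ℝ → ℝ) (hJc : Continuous J) (hJnn : ∀ x, 0 ≤ J x)
    (hJeven : ∀ x, J (-x) = J x) (hJbdd : BddAbove (Set.range J))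
    (hJ0 : 0 < J 0) (hJint : Integrable J) (hJ1 : (∫ x, J x) = 1)
    (d : ℝ) (hd : 0 < d) (a0 : ℝ) (ha0 : 0 < a0) :
    (∀ l : ℝ, 0 < l → lambdaP d J 0 l a0 ≤ a0) ∧
    Filter.Tendsto (fun l => lambdaP d J 0 l a0) Filter.atTop (nhds a0) := by
  have heq : ∀ l : ℝ, lambdaP d J 0 l a0 = sInf (lamSet d J l a0) := fun l => rfl
  have hbdd : ∀ l : ℝ, 0 ≤ l → BddBelow (lamSet d J l a0) := fun l hl =>
    ⟨a0 - d, fun b hb => lamSet_lower_simple hJnn hd hl hb⟩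
  have hupper : ∀ l : ℝ, 0 < l → lambdaP d J 0 l a0 ≤ a0 := by
    intro l hl
    rw [heq l]
    exact csInf_le (hbdd l hl.le) (a0_mem_lamSet hJnn hJint hJ1 hd hl.le)
  refine ⟨hupper, ?_⟩
  rw [Metric.tendsto_atTop]
  intro ε hε
  have hc1 : Tendsto (fun m : ℝ => ∫ u in (-m)..m, J u) atTop (𝓝 1) := by
    have h := MeasureTheory.intervalIntegral_tendsto_integral (μ := volume) hJint
      (tendsto_neg_atTop_atBot) (tendsto_id (α := ℝ))
    rw [hJ1] at h
    exact h
  have h2 : ∀ᶠ m : ℝ in atTop, 1 - ε / (2 * d) < ∫ u in (-m)..m, J u :=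
    hc1.eventually (eventually_gt_nhds (by
      have : 0 < ε / (2 * d) := by positivity
      linarith))
  obtain ⟨m, hm1, hm0⟩ := (h2.and (eventually_gt_atTop 0)).exists
  refine ⟨max (2 * m) (4 * d * m / ε) + 1, fun l hlN => ?_⟩
  have hl2m : 2 * m ≤ l := by
    have := le_max_left (2 * m) (4 * d * m / ε)
    linarith
  have hl4 : 4 * d * m / ε + 1 ≤ l := by
    have := le_max_right (2 * m) (4 * d * m / ε)
    linarith
  have hl0 : 0 < l := by linarith
  set cm := ∫ u in (-m)..m, J u with hcmdef
  have hcm0 : 0 ≤ cm := intervalIntegral.integral_nonneg (by linarith) fun u _ => hJnn u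
  have hcm1 : cm ≤ 1 := intJ_le_one hJnn hJint hJ1 (by linarith)
  set I := ∫ x in Ioc (0:ℝ) l, ∫ y in Ioc (0:ℝ) l, J (x - y) with hI
  have hlow : a0 - d + (d / l) * I ≤ lambdaP d J 0 l a0 := by
    rw [heq l]
    exact le_csInf ⟨a0, a0_mem_lamSet hJnn hJint hJ1 hd hl0.le⟩
      (fun b hb => lamSet_lower J hJc hJnn hJeven hd hl0 hb)
  have hIlow : (l - 2 * m) * cm ≤ I := I_lower J hJc hJnn hJint hm0 hl2m
  have hup := hupper l hl0
  -- quantitative bound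
  have t1 : (d / l) * ((l - 2 * m) * cm) ≤ (d / l) * I :=
    mul_le_mul_of_nonneg_left hIlow (by positivity)
  have t2 : (d / l) * ((l - 2 * m) * cm) = d * cm - (2 * d * m / l) * cm := by
    field_simp
  have t3 : d - d * cm < ε / 2 := by
    have h5 : 1 - cm < ε / (2 * d) := by linarith
    have h6 : d * (1 - cm) < d * (ε / (2 * d)) := mul_lt_mul_of_pos_left h5 hd
    have h7 : d * (ε / (2 * d)) = ε / 2 := by
      field_simp
    nlinarith
  have t4 : (2 * d * m / l) * cm ≤ ε / 2 := by
    have h6 : 4 * d * m + ε ≤ ε * l := by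
      have h7 : ε * (4 * d * m / ε + 1) ≤ ε * l := mul_le_mul_of_nonneg_left hl4 hε.le
      have h8 : ε * (4 * d * m / ε + 1) = 4 * d * m + ε := by
        field_simp
      linarith
    have h9 : 2 * d * m / l ≤ ε / 2 := by
      rw [div_le_iff₀ hl0]
      nlinarith
    have h10 : 0 ≤ 2 * d * m / l := by positivity
    nlinarith
  rw [Real.dist_eq, abs_lt]
  constructor
  · -- -ε < lambdaP - a0
    have : a0 - lambdaP d J 0 l a0 ≤ d - (d / l) * I := by linarith
    nlinarith [t1, t2.le, t2.ge, t3, t4]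
  · linarith
end

section
/- (Limit of the principal eigenvalue on short intervals) Let a0 > 0 be a constant. Then λ_p(ℓ) := λ_p(L_{(0,ℓ)} + a0) satisfies λ_p(ℓ) → a0 − d as ℓ → 0⁺; more precisely, if λ_p(ℓ) is attained by a strictly positive continuous eigenfunction φ (i.e., d∫_0^ℓ J(x−y)φ(y)dy − dφ(x) + a0φ(x) = λ_p(ℓ)φ(x) on [0,ℓ]), then |λ_p(ℓ) − a0 + d| ≤ d·(sup_ℝ J)·ℓ. -/
open MeasureTheory Set Filter Topology

lemma lambdaP_bounds (J : ℝ → ℝ) (hJc : Continuous J) (hJnn : ∀ x, 0 ≤ J x)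
    (hJbdd : BddAbove (Set.range J))
    (d : ℝ) (hd : 0 < d) (a0 : ℝ) (l : ℝ) (hl : 0 < l) :
    a0 - d ≤ lambdaP d J 0 l a0 ∧
      lambdaP d J 0 l a0 ≤ a0 - d + d * (⨆ x, J x) * l := by
  set M := ⨆ x, J x with hM
  set S := {lam : ℝ | ∃ φ : ℝ → ℝ, ContinuousOn φ (Set.Icc 0 l) ∧
    (∀ x ∈ Set.Icc 0 l, 0 < φ x) ∧
    ∀ x ∈ Set.Icc 0 l,
      d * ((∫ y in (0:ℝ)..l, J (x - y) * φ y) - φ x) + a0 * φ x ≤ lam * φ x} with hS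
  have hmemM : ∀ x, J x ≤ M := fun x => le_ciSup hJbdd x
  have hub : (a0 - d + d * M * l) ∈ S := by
    refine ⟨fun _ => 1, continuousOn_const, fun x _ => one_pos, fun x hx => ?_⟩
    have hint : (∫ y in (0:ℝ)..l, J (x - y) * 1) ≤ l * M := by
      have h1 : IntervalIntegrable (fun y => J (x - y) * 1) volume 0 l := by
        exact ((hJc.comp (continuous_const.sub continuous_id)).mul
          continuous_const).intervalIntegrable 0 l
      have h2 : IntervalIntegrable (fun _ : ℝ => M) volume 0 l :=
        intervalIntegrable_const
      have := intervalIntegral.integral_mono_on hl.le h1 h2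
        (fun y _ => by simpa using hmemM (x - y))
      simpa [intervalIntegral.integral_const, smul_eq_mul] using this
    have h3 := mul_le_mul_of_nonneg_left hint hd.le
    simp only [mul_one] at h3 ⊢
    nlinarith
  have hlb : ∀ lam ∈ S, a0 - d ≤ lam := by
    intro lam hlam
    obtain ⟨φ, hφc, hφpos, hφle⟩ := hlam
    have h0 : (0:ℝ) ∈ Set.Icc 0 l := ⟨le_refl 0, hl.le⟩
    have hintnn : 0 ≤ ∫ y in (0:ℝ)..l, J (0 - y) * φ y := by
      apply intervalIntegral.integral_nonneg hl.le
      intro y hy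
      exact mul_nonneg (hJnn _) (hφpos y hy).le
    have h := hφle 0 h0
    have hφ0 := hφpos 0 h0
    nlinarith
  constructor
  · exact le_csInf ⟨_, hub⟩ hlb
  · exact csInf_le ⟨a0 - d, hlb⟩ hub

/-- **Limit of the principal eigenvalue on short intervals**
(Proposition 3.4(iii) of Cao–Du–Li–Li). -/
theorem lambdaP_limit_short_intervals
    (J : ℝ → ℝ) (hJc : Continuous J) (hJnn : ∀ x, 0 ≤ J x)
    (hJeven : ∀ x, J (-x) = J x) (hJbdd : BddAbove (Set.range J))
    (hJ0 : 0 < J 0) (hJint : Integrable J) (hJ1 : (∫ x, J x) = 1)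
    (d : ℝ) (hd : 0 < d) (a0 : ℝ) (ha0 : 0 < a0) :
    Filter.Tendsto (fun l => lambdaP d J 0 l a0) (nhdsWithin 0 (Set.Ioi 0))
      (nhds (a0 - d)) ∧
    ∀ l : ℝ, 0 < l → ∀ φ : ℝ → ℝ, ContinuousOn φ (Set.Icc 0 l) →
      (∀ x ∈ Set.Icc 0 l, 0 < φ x) →
      (∀ x ∈ Set.Icc 0 l,
        d * (∫ y in (0:ℝ)..l, J (x - y) * φ y) - d * φ x + a0 * φ x =
          lambdaP d J 0 l a0 * φ x) →
      |lambdaP d J 0 l a0 - a0 + d| ≤ d * (⨆ x, J x) * l := by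
  set M := ⨆ x, J x with hM
  have hbd := fun l hl => lambdaP_bounds J hJc hJnn hJbdd d hd a0 l hl
  have hMpos : 0 < M := lt_of_lt_of_le hJ0 (le_ciSup hJbdd 0)
  constructor
  · have hup : Tendsto (fun l : ℝ => a0 - d + d * M * l)
        (nhdsWithin 0 (Set.Ioi 0)) (nhds (a0 - d)) := by
      have : Tendsto (fun l : ℝ => a0 - d + d * M * l) (nhds 0)
          (nhds (a0 - d + d * M * 0)) := by
        exact (continuous_const.add (continuous_const.mul continuous_id)).tendsto 0
      simpa using this.mono_left nhdsWithin_le_nhds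
    refine tendsto_of_tendsto_of_tendsto_of_le_of_le' tendsto_const_nhds hup ?_ ?_
    · filter_upwards [self_mem_nhdsWithin] with l hl
      exact (hbd l hl).1
    · filter_upwards [self_mem_nhdsWithin] with l hl
      exact (hbd l hl).2
  · intro l hl φ _ _ _
    obtain ⟨h1, h2⟩ := hbd l hl
    rw [abs_le]
    constructor
    · nlinarith
    · linarith
end

section
/- (Convergence of steady states on expanding intervals) There exists L > 0 such that λ_p(L_{(ℓ1,ℓ2)} + f'(0)) > 0 for every bounded interval (ℓ1,ℓ2) with ℓ2 − ℓ1 > L. Assume moreover that for each bounded interval I = (ℓ1,ℓ2) with ℓ2 − ℓ1 > L the steady-state equation d(∫_{ℓ1}^{ℓ2} J(x−y) u(y) dy − u(x)) + f(u(x)) = 0 on [ℓ1,ℓ2] admits a unique positive continuous solution u_I, that u_I ≤ K0 on I, and that u_{I1} ≤ u_{I2} on I1 whenever I1 ⊆ I2 (both of length > L). Then u_{(ℓ1,ℓ2)} → v0 locally uniformly in ℝ as ℓ1 → −∞ and ℓ2 → +∞, where v0 is the unique positive zero of f. -/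
set_option maxHeartbeats 1000000


open MeasureTheory Set Filter Topology

/-- **Convergence of steady states on expanding intervals**
(Proposition 3.6 of Cao–Du–Li–Li). -/
theorem steady_states_converge_on_expanding_intervals
    (J : ℝ → ℝ) (hJc : Continuous J) (hJnn : ∀ x, 0 ≤ J x)
    (hJeven : ∀ x, J (-x) = J x) (hJbdd : BddAbove (Set.range J))
    (hJ0 : 0 < J 0) (hJint : Integrable J) (hJ1 : (∫ x, J x) = 1)
    (d : ℝ) (hd : 0 < d)
    (f : ℝ → ℝ) (hfc : ContinuousOn f (Set.Ici 0)) (hf0 : f 0 = 0)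
    (hfLip : ∀ L > 0, ∃ K > 0, ∀ u1 ∈ Set.Icc 0 L, ∀ u2 ∈ Set.Icc 0 L,
      |f u1 - f u2| ≤ K * |u1 - u2|)
    (K0 : ℝ) (hK0 : 0 < K0) (hfneg : ∀ u, K0 ≤ u → f u < 0)
    (hfdec : StrictAntiOn (fun u => f u / u) (Set.Ioi 0))
    (fp0 : ℝ) (hfp0 : HasDerivWithinAt f fp0 (Set.Ici 0) 0) (hfp0pos : 0 < fp0)
    (v0 : ℝ) (hv0pos : 0 < v0) (hv0zero : f v0 = 0)
    (hv0uniq : ∀ v, 0 < v → f v = 0 → v = v0) :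
    ∃ L > 0,
      (∀ l1 l2 : ℝ, L < l2 - l1 → 0 < lambdaP d J l1 l2 fp0) ∧
      ∀ U : ℝ → ℝ → ℝ → ℝ,
        (∀ l1 l2 : ℝ, L < l2 - l1 →
          ContinuousOn (U l1 l2) (Set.Icc l1 l2) ∧
          (∀ x ∈ Set.Icc l1 l2, 0 < U l1 l2 x ∧ U l1 l2 x ≤ K0) ∧
          (∀ x ∈ Set.Icc l1 l2,
            d * ((∫ y in l1..l2, J (x - y) * U l1 l2 y) - U l1 l2 x) + f (U l1 l2 x) = 0) ∧
          (∀ w : ℝ → ℝ, ContinuousOn w (Set.Icc l1 l2) → (∀ x ∈ Set.Icc l1 l2, 0 < w x) →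
            (∀ x ∈ Set.Icc l1 l2,
              d * ((∫ y in l1..l2, J (x - y) * w y) - w x) + f (w x) = 0) →
            ∀ x ∈ Set.Icc l1 l2, w x = U l1 l2 x)) →
        (∀ l1 l2 l1' l2' : ℝ, L < l2 - l1 → L < l2' - l1' → l1' ≤ l1 → l2 ≤ l2' →
          ∀ x ∈ Set.Icc l1 l2, U l1 l2 x ≤ U l1' l2' x) →
        ∀ ε > 0, ∀ A > 0, ∃ R > 0, ∀ l1 l2 : ℝ, l1 < -R → R < l2 →
          ∀ x ∈ Set.Icc (-A) A, |U l1 l2 x - v0| < ε := by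
  obtain ⟨ε1, hε1pos, hε1le, hε1half⟩ :
      ∃ ε1 : ℝ, 0 < ε1 ∧ ε1 ≤ fp0/(4*d) ∧ ε1 ≤ 1/2 :=
    ⟨min (fp0/(4*d)) (1/2), lt_min (by positivity) (by norm_num),
      min_le_left _ _, min_le_right _ _⟩
  have htend : Tendsto (fun r : ℝ => ∫ x in (-r)..r, J x) atTop (𝓝 1) := by
    have := MeasureTheory.intervalIntegral_tendsto_integral (μ := volume) hJint
      (tendsto_neg_atTop_atBot) tendsto_id
    rwa [hJ1] at this
  obtain ⟨R, hRge1, hRint⟩ : ∃ R : ℝ, 1 ≤ R ∧ 1 - ε1 ≤ ∫ x in (-R)..R, J x := by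
    have h1 : ∀ᶠ r : ℝ in atTop, 1 - ε1 ≤ ∫ x in (-r)..r, J x :=
      htend.eventually (eventually_ge_nhds (by linarith))
    obtain ⟨R, hR1, hR2⟩ := (eventually_ge_atTop (1:ℝ)).and h1 |>.exists
    exact ⟨R, hR1, hR2⟩
  have hRpos : (0:ℝ) < R := by linarith
  have hmaxA := le_max_left (8*d*R/fp0) (2*R)
  have hmaxB := le_max_right (8*d*R/fp0) (2*R)
  obtain ⟨L, hLdef⟩ : ∃ L : ℝ, L = max (8*d*R/fp0) (2*R) + 1 := ⟨_, rfl⟩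
  have hLpos : 0 < L := by rw [hLdef]; positivity
  refine ⟨L, hLpos, ?_, ?_⟩
  · intro l1 l2 hlen
    rw [hLdef] at hlen
    have h2R : 2*R < l2 - l1 := by linarith
    have hl12 : l1 ≤ l2 := by linarith
    have h8R : 8*d*R < fp0 * (l2 - l1) := by
      have h0 : 8*d*R/fp0 < l2 - l1 := by linarith
      calc 8*d*R = (8*d*R/fp0) * fp0 := by field_simp
      _ < (l2 - l1) * fp0 := mul_lt_mul_of_pos_right h0 hfp0pos
      _ = fp0 * (l2 - l1) := mul_comm _ _
    unfold lambdaP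
    have h0half : (0:ℝ) < fp0/2 := by linarith
    refine lt_of_lt_of_le h0half (le_csInf ⟨fp0, ?_⟩ ?_)
    · -- nonemptiness: fp0 is in the set, witness φ ≡ 1
      refine ⟨fun _ => 1, continuousOn_const, fun x _ => one_pos, ?_⟩
      intro x _
      show d * ((∫ y in l1..l2, J (x - y) * 1) - 1) + fp0 * 1 ≤ fp0 * 1
      have hint1 : (∫ y in l1..l2, J (x - y) * 1) ≤ 1 := by
        simp only [mul_one]
        rw [intervalIntegral.integral_of_le hl12]
        calc ∫ y in Ioc l1 l2, J (x - y) ≤ ∫ y, J (x - y) := by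
              apply setIntegral_le_integral (hJint.comp_sub_left x)
              exact Filter.Eventually.of_forall (fun y => hJnn _)
          _ = ∫ y, J y := integral_sub_left_eq_self J volume x
          _ = 1 := hJ1
      nlinarith
    · -- every element of the set is at least fp0/2
      rintro lam ⟨φ, hφc, hφpos, hφineq⟩
      set ψ : ℝ → ℝ := fun x => φ (min l2 (max l1 x)) with hψdef
      have hmem : ∀ x : ℝ, min l2 (max l1 x) ∈ Icc l1 l2 := fun x =>
        ⟨le_min hl12 (le_max_left _ _), min_le_left _ _⟩
      have hψcont : Continuous ψ :=
        hφc.comp_continuous (continuous_const.min (continuous_const.max continuous_id)) hmem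
      have hψpos : ∀ x, 0 < ψ x := fun x => hφpos _ (hmem x)
      have hψeq : ∀ x ∈ Icc l1 l2, ψ x = φ x := by
        intro x hx
        simp only [hψdef, max_eq_right hx.1, min_eq_right hx.2]
      have hkey1 : ∀ x ∈ Icc l1 l2,
          d * (∫ y in Icc l1 l2, J (x - y) * ψ y) ≤ (lam - fp0 + d) * ψ x := by
        intro x hx
        have h1 := hφineq x hx
        have h2 : (∫ y in l1..l2, J (x - y) * φ y) = ∫ y in Icc l1 l2, J (x - y) * ψ y := by
          rw [intervalIntegral.integral_of_le hl12, ← integral_Icc_eq_integral_Ioc]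
          apply setIntegral_congr_fun measurableSet_Icc
          intro y hy; dsimp only; rw [hψeq y hy]
        rw [h2] at h1
        rw [← hψeq x hx] at h1
        linarith
      set Q : Set (ℝ × ℝ) := Icc l1 l2 ×ˢ Icc l1 l2 with hQdef
      have hQc : IsCompact Q := isCompact_Icc.prod isCompact_Icc
      have hQm : MeasurableSet Q := (measurableSet_Icc).prod measurableSet_Icc
      set G : ℝ × ℝ → ℝ := fun p => J (p.1 - p.2) * ψ p.2 / ψ p.1 with hGdef
      have hGcont : Continuous G := by
        apply Continuous.div
        · exact (hJc.comp (continuous_fst.sub continuous_snd)).mul (hψcont.comp continuous_snd)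
        · exact hψcont.comp continuous_fst
        · exact fun p => (hψpos p.1).ne'
      have hGswapcont : Continuous (fun p : ℝ × ℝ => G (Prod.swap p)) :=
        hGcont.comp continuous_swap
      have hGint : IntegrableOn G Q := hGcont.continuousOn.integrableOn_compact hQc
      have hGswapint : IntegrableOn (fun p : ℝ × ℝ => G (Prod.swap p)) Q :=
        hGswapcont.continuousOn.integrableOn_compact hQc
      have hJQcont : Continuous (fun p : ℝ × ℝ => J (p.1 - p.2)) :=
        hJc.comp (continuous_fst.sub continuous_snd)
      have hJQint : IntegrableOn (fun p : ℝ × ℝ => J (p.1 - p.2)) Q :=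
        hJQcont.continuousOn.integrableOn_compact hQc
      have hGprod : ∫ p in Q, G p = ∫ x in Icc l1 l2, ∫ y in Icc l1 l2, G (x, y) :=
        MeasureTheory.setIntegral_prod G hGint
      have hinner : ∀ x ∈ Icc l1 l2, (∫ y in Icc l1 l2, G (x, y)) ≤ (lam - fp0 + d) / d := by
        intro x hx
        have h1 : (∫ y in Icc l1 l2, G (x, y)) = (∫ y in Icc l1 l2, J (x - y) * ψ y) / ψ x := by
          simp only [hGdef]
          exact integral_div _ _
        rw [h1, div_le_div_iff₀ (hψpos x) hd]
        nlinarith [hkey1 x hx]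
      have hinnerint : IntegrableOn (fun x => ∫ y in Icc l1 l2, G (x, y)) (Icc l1 l2) := by
        have h := hGint
        rw [IntegrableOn, hQdef, Measure.volume_eq_prod, ← Measure.prod_restrict] at h
        exact h.integral_prod_left
      have hup : ∫ p in Q, G p ≤ (l2 - l1) * ((lam - fp0 + d) / d) := by
        rw [hGprod]
        calc ∫ x in Icc l1 l2, ∫ y in Icc l1 l2, G (x, y)
            ≤ ∫ _x in Icc l1 l2, (lam - fp0 + d) / d := by
              apply setIntegral_mono_on hinnerint (integrableOn_const (by
                rw [Real.volume_Icc]; exact ENNReal.ofReal_ne_top) enorm_ne_top) measurableSet_Icc hinner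
          _ = (l2 - l1) * ((lam - fp0 + d) / d) := by
              rw [setIntegral_const, measureReal_def, Real.volume_Icc,
                ENNReal.toReal_ofReal (by linarith), smul_eq_mul]
      have hswap : ∫ p in Q, G p = ∫ p in Q, G (Prod.swap p) := by
        rw [hQdef, Measure.volume_eq_prod, ← Measure.prod_restrict]
        exact (MeasureTheory.integral_prod_swap G).symm
      have hsym : ∫ p in Q, J (p.1 - p.2) ≤ ∫ p in Q, G p := by
        have hptwise : ∀ p ∈ Q, 2 * J (p.1 - p.2) ≤ G p + G (Prod.swap p) := by
          intro p _
          have hb := hψpos p.1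
          have hc := hψpos p.2
          have hje : J (p.2 - p.1) = J (p.1 - p.2) := by
            rw [← hJeven (p.1 - p.2)]; ring_nf
          have hG1 : G p + G (Prod.swap p)
              = J (p.1 - p.2) * (ψ p.2 * ψ p.2 + ψ p.1 * ψ p.1) / (ψ p.1 * ψ p.2) := by
            simp only [hGdef, Prod.swap, hje]
            field_simp
          rw [hG1, le_div_iff₀ (by positivity)]
          nlinarith [sq_nonneg (ψ p.1 - ψ p.2), hJnn (p.1 - p.2), mul_pos hb hc]
        have h2 : ∫ p in Q, 2 * J (p.1 - p.2) ≤ ∫ p in Q, (G p + G (Prod.swap p)) :=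
          setIntegral_mono_on (hJQint.const_mul 2) (hGint.add hGswapint) hQm hptwise
        rw [integral_add hGint hGswapint, ← hswap, integral_const_mul] at h2
        linarith
      have hJprod : ∫ p in Q, J (p.1 - p.2)
          = ∫ x in Icc l1 l2, ∫ y in Icc l1 l2, J (x - y) :=
        MeasureTheory.setIntegral_prod _ hJQint
      have hwint : IntegrableOn (fun x => ∫ y in Icc l1 l2, J (x - y)) (Icc l1 l2) := by
        have h := hJQint
        rw [IntegrableOn, hQdef, Measure.volume_eq_prod, ← Measure.prod_restrict] at h
        exact h.integral_prod_left
      have hlow : (1 - ε1) * ((l2 - l1) - 2*R) ≤ ∫ p in Q, J (p.1 - p.2) := by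
        rw [hJprod]
        have hindint : IntegrableOn ((Icc (l1+R) (l2-R)).indicator (fun _ => (1 - ε1)))
            (Icc l1 l2) := by
          apply Integrable.indicator _ measurableSet_Icc
          exact (integrableOn_const (by rw [Real.volume_Icc]; exact ENNReal.ofReal_ne_top) enorm_ne_top)
        have hptwise : ∀ x ∈ Icc l1 l2,
            (Icc (l1+R) (l2-R)).indicator (fun _ => (1 - ε1)) x ≤ ∫ y in Icc l1 l2, J (x - y) := by
          intro x hx
          by_cases hxin : x ∈ Icc (l1+R) (l2-R)
          · rw [indicator_of_mem hxin]
            have hsub : Icc (x-R) (x+R) ⊆ Icc l1 l2 := by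
              apply Icc_subset_Icc
              · linarith [hxin.1]
              · linarith [hxin.2]
            have hJx : IntegrableOn (fun y => J (x - y)) (Icc l1 l2) :=
              (hJc.comp (continuous_const.sub continuous_id)).continuousOn.integrableOn_compact
                isCompact_Icc
            calc (1 - ε1) ≤ ∫ t in (-R)..R, J t := hRint
              _ = ∫ y in (x-R)..(x+R), J (x - y) := by
                  rw [intervalIntegral.integral_comp_sub_left (fun t => J t) x]
                  norm_num
              _ = ∫ y in Icc (x-R) (x+R), J (x - y) := by
                  rw [intervalIntegral.integral_of_le (by linarith), ← integral_Icc_eq_integral_Ioc]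
              _ ≤ ∫ y in Icc l1 l2, J (x - y) := by
                  apply setIntegral_mono_set hJx
                  · exact Filter.Eventually.of_forall (fun y => hJnn _)
                  · exact Filter.Eventually.of_forall hsub
          · rw [indicator_of_notMem hxin]
            exact setIntegral_nonneg measurableSet_Icc (fun y _ => hJnn _)
        calc (1 - ε1) * ((l2 - l1) - 2*R)
            = ∫ x in Icc l1 l2, (Icc (l1+R) (l2-R)).indicator (fun _ => (1 - ε1)) x := by
              rw [setIntegral_indicator measurableSet_Icc]
              have hinter : Icc l1 l2 ∩ Icc (l1+R) (l2-R) = Icc (l1+R) (l2-R) := by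
                apply inter_eq_self_of_subset_right
                apply Icc_subset_Icc <;> linarith
              rw [hinter, setIntegral_const, measureReal_def, Real.volume_Icc,
                ENNReal.toReal_ofReal (by linarith), smul_eq_mul]
              ring
          _ ≤ ∫ x in Icc l1 l2, ∫ y in Icc l1 l2, J (x - y) :=
              setIntegral_mono_on hindint hwint measurableSet_Icc hptwise
      have hfinal : d * ((1 - ε1) * ((l2 - l1) - 2*R)) ≤ (l2 - l1) * (lam - fp0 + d) := by
        have h1 : (1 - ε1) * ((l2 - l1) - 2*R) ≤ (l2 - l1) * ((lam - fp0 + d) / d) :=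
          le_trans hlow (le_trans hsym hup)
        calc d * ((1 - ε1) * ((l2 - l1) - 2*R))
            ≤ d * ((l2 - l1) * ((lam - fp0 + d) / d)) := mul_le_mul_of_nonneg_left h1 hd.le
          _ = (l2 - l1) * (lam - fp0 + d) := by field_simp
      have hε4 : ε1 * (4 * d) ≤ fp0 := (le_div_iff₀ (by positivity : (0:ℝ) < 4*d)).mp hε1le
      have e1 : d * ε1 * (l2 - l1) ≤ fp0 * (l2 - l1) / 4 := by
        have := mul_le_mul_of_nonneg_right hε4 (by linarith : (0:ℝ) ≤ l2 - l1)
        linarith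
      have e2 : 2 * d * R ≤ fp0 * (l2 - l1) / 4 := by linarith
      have e3 : (0:ℝ) ≤ 2 * d * ε1 * R := by positivity
      have e4 : fp0/2 * (l2 - l1) ≤ (l2 - l1) * lam := by nlinarith [hfinal, e1, e2, e3]
      nlinarith [e4, h2R, hRpos]
  · intro U hU1 hU2
    -- translation invariance from uniqueness
    have hT : ∀ l1 l2 b : ℝ, L < l2 - l1 → ∀ x ∈ Icc l1 l2,
        U (l1+b) (l2+b) (x+b) = U l1 l2 x := by
      intro l1 l2 b hlen x hx
      obtain ⟨hc', hpb', heq', _⟩ := hU1 (l1+b) (l2+b) (by linarith)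
      obtain ⟨_, _, _, huniq⟩ := hU1 l1 l2 hlen
      refine huniq (fun y => U (l1+b) (l2+b) (y+b)) ?_ ?_ ?_ x hx
      · apply hc'.comp (continuous_id.add continuous_const).continuousOn
        intro y hy
        simp only [Pi.add_apply, id_eq]
        exact ⟨by linarith [hy.1], by linarith [hy.2]⟩
      · intro y hy
        exact (hpb' (y+b) ⟨by linarith [hy.1], by linarith [hy.2]⟩).1
      · intro y hy
        show d * ((∫ z in l1..l2, J (y - z) * U (l1+b) (l2+b) (z+b)) - U (l1+b) (l2+b) (y+b))
            + f (U (l1+b) (l2+b) (y+b)) = 0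
        have h2 : (∫ z in l1..l2, J (y - z) * U (l1+b) (l2+b) (z+b)) =
            ∫ z in l1+b..l2+b, J (y + b - z) * U (l1+b) (l2+b) z := by
          rw [← intervalIntegral.integral_comp_add_right
            (fun z => J (y + b - z) * U (l1+b) (l2+b) z) b]
          apply intervalIntegral.integral_congr
          intro z _
          have : y + b - (z + b) = y - z := by ring
          simp only [this]
        rw [h2]
        exact heq' (y+b) ⟨by linarith [hy.1], by linarith [hy.2]⟩
    -- the increasing family of centered solutions
    set r₀ : ℝ := L/2 + 1 with hr₀def
    have hr₀pos : 0 < r₀ := by simp only [hr₀def]; linarith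
    have hlen2 : ∀ r : ℝ, r₀ ≤ r → L < r - (-r) := by
      intro r h; simp only [hr₀def] at h; linarith
    have h0mem : ∀ r : ℝ, r₀ ≤ r → (0:ℝ) ∈ Icc (-r) r := by
      intro r h
      constructor <;> [linarith; linarith]
    have hcmono : ∀ r s : ℝ, r₀ ≤ r → r ≤ s → ∀ x ∈ Icc (-r) r, U (-r) r x ≤ U (-s) s x := by
      intro r s hr hrs x hx
      exact hU2 (-r) r (-s) s (hlen2 r hr) (hlen2 s (le_trans hr hrs))
        (by linarith) (by linarith) x hx
    have hcpos : ∀ r, r₀ ≤ r → 0 < U (-r) r 0 :=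
      fun r hr => ((hU1 _ _ (hlen2 r hr)).2.1 0 (h0mem r hr)).1
    have hcK0 : ∀ r, r₀ ≤ r → U (-r) r 0 ≤ K0 :=
      fun r hr => ((hU1 _ _ (hlen2 r hr)).2.1 0 (h0mem r hr)).2
    set v : ℝ := sSup ((fun r => U (-r) r 0) '' Ici r₀) with hvdef
    have hbdd : BddAbove ((fun r => U (-r) r 0) '' Ici r₀) := by
      refine ⟨K0, ?_⟩
      rintro _ ⟨r, hr, rfl⟩
      exact hcK0 r hr
    have hne : ((fun r => U (-r) r 0) '' Ici r₀).Nonempty := ⟨_, ⟨r₀, self_mem_Ici, rfl⟩⟩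
    have hcle : ∀ r, r₀ ≤ r → U (-r) r 0 ≤ v := fun r hr => le_csSup hbdd ⟨r, hr, rfl⟩
    have hvpos : 0 < v := lt_of_lt_of_le (hcpos r₀ le_rfl) (hcle r₀ le_rfl)
    have hctend : Tendsto (fun r => U (-r) r 0) atTop (𝓝 v) := by
      rw [Metric.tendsto_atTop]
      intro ε hε
      obtain ⟨_, ⟨r1, hr1, rfl⟩, h1⟩ := exists_lt_of_lt_csSup hne (by linarith : v - ε < v)
      refine ⟨max r1 r₀, fun r hr => ?_⟩
      have hrr₀ : r₀ ≤ r := le_trans (le_max_right _ _) hr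
      have h2 : U (-r1) r1 0 ≤ U (-r) r 0 :=
        hcmono r1 r hr1 (le_trans (le_max_left _ _) hr) 0 (h0mem r1 hr1)
      have h3 : U (-r) r 0 ≤ v := hcle r hrr₀
      rw [Real.dist_eq, abs_lt]
      constructor <;> [linarith; linarith]
    -- pointwise limit at every point
    have hP : ∀ x : ℝ, Tendsto (fun r => U (-r) r x) atTop (𝓝 v) := by
      intro x
      have habs1 : -|x| ≤ x := neg_abs_le x
      have habs2 : x ≤ |x| := le_abs_self x
      have htrans : ∀ᶠ r in atTop, U (-r) r x = U (-r - x) (r - x) 0 := by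
        filter_upwards [eventually_ge_atTop (r₀ + |x|)] with r hr
        have hx : x ∈ Icc (-r) r := ⟨by linarith, by linarith⟩
        have := hT (-r) r (-x) (hlen2 r (by linarith)) x hx
        have e1 : -r + -x = -r - x := by ring
        have e2 : r + -x = r - x := by ring
        have e3 : x + -x = (0:ℝ) := by ring
        rw [e1, e2, e3] at this
        exact this.symm
      have hup : ∀ᶠ r in atTop, U (-r) r x ≤ U (-(r+|x|)) (r+|x|) 0 := by
        filter_upwards [htrans, eventually_ge_atTop (r₀ + |x|)] with r heq hr
        rw [heq]
        refine hU2 (-r - x) (r - x) (-(r+|x|)) (r+|x|) ?_ ?_ (by linarith) (by linarith) 0 ?_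
        · have := hlen2 r (by linarith); linarith
        · exact hlen2 (r + |x|) (by linarith [abs_nonneg x])
        · constructor <;> [linarith; linarith]
      have hlo : ∀ᶠ r in atTop, U (-(r-|x|)) (r-|x|) 0 ≤ U (-r) r x := by
        filter_upwards [htrans, eventually_ge_atTop (r₀ + |x| + |x|)] with r heq hr
        rw [heq]
        refine hU2 (-(r-|x|)) (r-|x|) (-r - x) (r - x) ?_ ?_ (by linarith) (by linarith) 0 ?_
        · exact hlen2 (r - |x|) (by linarith)
        · have := hlen2 r (by linarith [abs_nonneg x]); linarith
        · constructor <;> [linarith; linarith]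
      have htend1 : Tendsto (fun r : ℝ => U (-(r-|x|)) (r-|x|) 0) atTop (𝓝 v) :=
        hctend.comp (tendsto_atTop_add_const_right atTop (-|x|) tendsto_id)
      have htend2 : Tendsto (fun r : ℝ => U (-(r+|x|)) (r+|x|) 0) atTop (𝓝 v) :=
        hctend.comp (tendsto_atTop_add_const_right atTop (|x|) tendsto_id)
      exact tendsto_of_tendsto_of_tendsto_of_le_of_le' htend1 htend2 hlo hup
    -- pass to the limit in the equation at x = 0, to get f v = 0
    have hrn : Tendsto (fun n : ℕ => r₀ + (n:ℝ)) atTop atTop :=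
      tendsto_atTop_add_const_left _ _ tendsto_natCast_atTop_atTop
    have hrnge : ∀ n : ℕ, r₀ ≤ r₀ + (n:ℝ) := fun n => by
      have : (0:ℝ) ≤ n := Nat.cast_nonneg n
      linarith
    have hc0 : Tendsto (fun n : ℕ => U (-(r₀+(n:ℝ))) (r₀+(n:ℝ)) 0) atTop (𝓝 v) := hctend.comp hrn
    have hInt : Tendsto (fun n : ℕ =>
        ∫ y in (-(r₀+(n:ℝ)))..(r₀+(n:ℝ)), J (0 - y) * U (-(r₀+(n:ℝ))) (r₀+(n:ℝ)) y)
        atTop (𝓝 v) := by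
      have hbound : Integrable (fun y : ℝ => J (0 - y) * K0) :=
        (hJint.comp_sub_left 0).mul_const K0
      have hgeq : ∀ n : ℕ,
          (∫ y in (-(r₀+(n:ℝ)))..(r₀+(n:ℝ)), J (0 - y) * U (-(r₀+(n:ℝ))) (r₀+(n:ℝ)) y)
          = ∫ y, (Icc (-(r₀+(n:ℝ))) (r₀+(n:ℝ))).indicator
              (fun y => J (0 - y) * U (-(r₀+(n:ℝ))) (r₀+(n:ℝ)) y) y := by
        intro n
        rw [intervalIntegral.integral_of_le (by linarith [hrnge n, hr₀pos]),
          ← integral_Icc_eq_integral_Ioc, ← integral_indicator measurableSet_Icc]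
      have hlim : Tendsto (fun n : ℕ => ∫ y, (Icc (-(r₀+(n:ℝ))) (r₀+(n:ℝ))).indicator
          (fun y => J (0 - y) * U (-(r₀+(n:ℝ))) (r₀+(n:ℝ)) y) y) atTop (𝓝 v) := by
        have hfinal : (∫ y, J (0 - y) * v) = v := by
          rw [integral_mul_const, integral_sub_left_eq_self J volume 0, hJ1, one_mul]
        rw [← hfinal]
        apply MeasureTheory.tendsto_integral_of_dominated_convergence
          (fun y : ℝ => J (0 - y) * K0)
        · intro n
          rw [aestronglyMeasurable_indicator_iff measurableSet_Icc]
          apply ContinuousOn.aestronglyMeasurable _ measurableSet_Icc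
          exact ((hJc.comp (continuous_const.sub continuous_id)).continuousOn).mul
            (hU1 _ _ (hlen2 _ (hrnge n))).1
        · exact hbound
        · intro n
          apply Eventually.of_forall
          intro y
          by_cases hy : y ∈ Icc (-(r₀+(n:ℝ))) (r₀+(n:ℝ))
          · rw [indicator_of_mem hy]
            obtain ⟨hUpos, hUK0⟩ := (hU1 _ _ (hlen2 _ (hrnge n))).2.1 y hy
            rw [Real.norm_eq_abs, abs_of_nonneg (mul_nonneg (hJnn _) hUpos.le)]
            exact mul_le_mul_of_nonneg_left hUK0 (hJnn _)
          · rw [indicator_of_notMem hy]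
            simp only [norm_zero]
            exact mul_nonneg (hJnn _) hK0.le
        · apply Eventually.of_forall
          intro y
          have hytend : Tendsto (fun n : ℕ => J (0 - y) * U (-(r₀+(n:ℝ))) (r₀+(n:ℝ)) y)
              atTop (𝓝 (J (0 - y) * v)) := tendsto_const_nhds.mul ((hP y).comp hrn)
          apply hytend.congr'
          have hev : ∀ᶠ n : ℕ in atTop, y ∈ Icc (-(r₀+(n:ℝ))) (r₀+(n:ℝ)) := by
            have : ∀ᶠ n : ℕ in atTop, |y| ≤ r₀ + (n:ℝ) :=
              (tendsto_atTop.1 hrn) |y|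
            filter_upwards [this] with n hn
            exact ⟨by linarith [neg_abs_le y], by linarith [le_abs_self y]⟩
          filter_upwards [hev] with n hn
          rw [indicator_of_mem hn]
      rw [show (fun n : ℕ =>
        ∫ y in (-(r₀+(n:ℝ)))..(r₀+(n:ℝ)), J (0 - y) * U (-(r₀+(n:ℝ))) (r₀+(n:ℝ)) y)
        = fun n : ℕ => ∫ y, (Icc (-(r₀+(n:ℝ))) (r₀+(n:ℝ))).indicator
              (fun y => J (0 - y) * U (-(r₀+(n:ℝ))) (r₀+(n:ℝ)) y) y from funext hgeq]
      exact hlim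
    have hfv : f v = 0 := by
      have heqn : ∀ n : ℕ, d * ((∫ y in (-(r₀+(n:ℝ)))..(r₀+(n:ℝ)),
          J (0 - y) * U (-(r₀+(n:ℝ))) (r₀+(n:ℝ)) y) - U (-(r₀+(n:ℝ))) (r₀+(n:ℝ)) 0)
          + f (U (-(r₀+(n:ℝ))) (r₀+(n:ℝ)) 0) = 0 :=
        fun n => (hU1 _ _ (hlen2 _ (hrnge n))).2.2.1 0 (h0mem _ (hrnge n))
      have hfcont : Tendsto (fun n : ℕ => f (U (-(r₀+(n:ℝ))) (r₀+(n:ℝ)) 0)) atTop (𝓝 (f v)) := by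
        apply ((hfc.continuousWithinAt (mem_Ici.2 hvpos.le)).tendsto).comp
        rw [tendsto_nhdsWithin_iff]
        exact ⟨hc0, Eventually.of_forall (fun n => mem_Ici.2 (hcpos _ (hrnge n)).le)⟩
      have hcomb : Tendsto (fun n : ℕ => d * ((∫ y in (-(r₀+(n:ℝ)))..(r₀+(n:ℝ)),
          J (0 - y) * U (-(r₀+(n:ℝ))) (r₀+(n:ℝ)) y) - U (-(r₀+(n:ℝ))) (r₀+(n:ℝ)) 0)
          + f (U (-(r₀+(n:ℝ))) (r₀+(n:ℝ)) 0)) atTop (𝓝 (d * (v - v) + f v)) :=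
        (((hInt.sub hc0).const_mul d).add hfcont)
      have h0 : Tendsto (fun _ : ℕ => (0:ℝ)) atTop (𝓝 (0:ℝ)) := tendsto_const_nhds
      have := tendsto_nhds_unique (hcomb.congr (fun n => heqn n)) h0
      have h1 : d * (v - v) + f v = 0 := this
      simpa using h1
    have hvv0 : v = v0 := hv0uniq v hvpos hfv
    -- global upper bound by v
    have hUB : ∀ l1 l2, L < l2 - l1 → ∀ x ∈ Icc l1 l2, U l1 l2 x ≤ v := by
      intro l1 l2 hlen x hx
      have hl12 : l1 ≤ l2 := by linarith
      set r1 : ℝ := max (max (-l1) l2) r₀ with hr1def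
      have hr1a : -l1 ≤ r1 := le_trans (le_max_left _ _) (le_max_left _ _)
      have hr1b : l2 ≤ r1 := le_trans (le_max_right _ _) (le_max_left _ _)
      have hr1c : r₀ ≤ r1 := le_max_right _ _
      have h1 : U l1 l2 x ≤ U (-r1) r1 x :=
        hU2 l1 l2 (-r1) r1 hlen (hlen2 r1 hr1c) (by linarith) hr1b x hx
      have hxmem : x ∈ Icc (-r1) r1 := ⟨by linarith [hx.1], by linarith [hx.2]⟩
      have h2 : U (-r1) r1 x ≤ v := by
        apply ge_of_tendsto (hP x)
        filter_upwards [eventually_ge_atTop r1] with r hr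
        exact hcmono r1 r hr1c hr x hxmem
      linarith
    -- final assembly
    intro ε hε A hA
    have hchoice : ∀ x ∈ Icc (-A) A, ∃ r : ℝ, r₀ ≤ r ∧ A + 1 ≤ r ∧ v - ε < U (-r) r x := by
      intro x _
      have h1 : ∀ᶠ r in atTop, v - ε < U (-r) r x :=
        (hP x).eventually (eventually_gt_nhds (by linarith))
      obtain ⟨r, h2, h3, h4⟩ := ((eventually_ge_atTop r₀).and
        ((eventually_ge_atTop (A+1)).and h1)).exists
      exact ⟨r, h2, h3, h4⟩
    set rfun : ℝ → ℝ := fun x => if h : x ∈ Icc (-A) A then (hchoice x h).choose else r₀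
      with hrfundef
    have hrfun : ∀ x (h : x ∈ Icc (-A) A), r₀ ≤ rfun x ∧ A + 1 ≤ rfun x ∧
        v - ε < U (-(rfun x)) (rfun x) x := by
      intro x h
      simp only [hrfundef, dif_pos h]
      exact (hchoice x h).choose_spec
    have hrfunpos : ∀ x, 0 < rfun x := by
      intro x
      by_cases h : x ∈ Icc (-A) A
      · linarith [(hrfun x h).1]
      · simp only [hrfundef, dif_neg h]; exact hr₀pos
    set V : ℝ → Set ℝ := fun x => {x' | v - ε < U (-(rfun x)) (rfun x) x'} with hVdef
    have hVnhds : ∀ x ∈ Icc (-A) A, V x ∈ 𝓝 x := by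
      intro x hx
      obtain ⟨h1, h2, h3⟩ := hrfun x hx
      have hxabs : |x| ≤ A := abs_le.2 ⟨hx.1, hx.2⟩
      have hcont : ContinuousAt (U (-(rfun x)) (rfun x)) x := by
        apply (hU1 _ _ (hlen2 _ h1)).1.continuousAt
        apply Icc_mem_nhds
        · linarith [abs_le.1 hxabs |>.1]
        · linarith [abs_le.1 hxabs |>.2]
      exact hcont.preimage_mem_nhds (Ioi_mem_nhds h3)
    obtain ⟨t, hts, hcover⟩ := isCompact_Icc.elim_nhds_subcover V hVnhds
    set R : ℝ := A + r₀ + 1 + ∑ x ∈ t, rfun x with hRdef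
    have hsum_nonneg : (0:ℝ) ≤ ∑ x ∈ t, rfun x :=
      Finset.sum_nonneg (fun i _ => (hrfunpos i).le)
    have hRpos : 0 < R := by simp only [hRdef]; linarith
    have hRA : A ≤ R := by simp only [hRdef]; linarith
    have hRr₀ : r₀ ≤ R := by simp only [hRdef]; linarith
    refine ⟨R, hRpos, ?_⟩
    intro l1 l2 hl1 hl2 x hx
    have hxA : -A ≤ x ∧ x ≤ A := ⟨hx.1, hx.2⟩
    obtain ⟨x0, hx0t, hxV⟩ := mem_iUnion₂.1 (hcover hx)
    have hx0mem : x0 ∈ Icc (-A) A := hts x0 hx0t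
    obtain ⟨hr1, hr2, _⟩ := hrfun x0 hx0mem
    have hrle : rfun x0 ≤ R := by
      have := Finset.single_le_sum (fun (i : ℝ) (_ : i ∈ t) => (hrfunpos i).le) hx0t
      simp only [hRdef]; linarith
    have hlen3 : L < l2 - l1 := by
      have := hlen2 R hRr₀
      linarith
    have hlow : U (-(rfun x0)) (rfun x0) x ≤ U l1 l2 x := by
      refine hU2 (-(rfun x0)) (rfun x0) l1 l2 (hlen2 _ hr1) hlen3 (by linarith) (by linarith) x ?_
      constructor <;> [linarith [hxA.1]; linarith [hxA.2]]
    have hupV : v - ε < U (-(rfun x0)) (rfun x0) x := hxV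
    have hxl : x ∈ Icc l1 l2 := ⟨by linarith [hxA.1], by linarith [hxA.2]⟩
    have hub : U l1 l2 x ≤ v := hUB l1 l2 hlen3 x hxl
    rw [abs_lt]
    constructor
    · rw [← hvv0]; linarith
    · rw [← hvv0] at *; linarith
end
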